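/- arXiv:1802.04621 — 3 statements merged into one kernel-verified Lean document; each statement's English description precedes it below -/
import Mathlib

section
/- Assume 0 < p < 1/2 (so p < q). For every integer x ≥ 0, the distribution of the reflected walk at the end of light cycles converges: lim_{m→∞} P(S_{2m} = x) = (q - p)·p^{2x} / q^{2x+2}. In particular the limiting distribution is geometric with ratio p²/q², and its probability generating function is H(z) = (q - p)/(q² - p²z). -/
open MeasureTheory ProbabilityTheory Filter

set_option maxHeartbeats 1000000 in
/-- For 0 < p < 1/2 and the ℓ = 1 walk, P(S_{2m} = x) converges to the
geometric law (q-p)p^{2x}/q^{2x+2} (ratio p²/q²), whose probability generating function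
is H(z) = (q-p)/(q² - p²z). -/
theorem maxQueue_stationary_distribution_ell_one
    (p q : ℝ) (hp : 0 < p) (hpq : p < 1 / 2) (hq : q = 1 - p)
    {Ω : Type*} [MeasurableSpace Ω] (μ : Measure Ω) [IsProbabilityMeasure μ]
    (X : ℕ → Ω → ℤ) (hXmeas : ∀ i, Measurable (X i))
    (hXindep : iIndepFun X μ)
    (hXodd : ∀ i : ℕ, Odd i →
      μ {ω | X i ω = 1} = ENNReal.ofReal p ∧ μ {ω | X i ω = 0} = ENNReal.ofReal q)
    (hXeven : ∀ i : ℕ, 1 ≤ i → Even i →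
      μ {ω | X i ω = 0} = ENNReal.ofReal p ∧ μ {ω | X i ω = -1} = ENNReal.ofReal q)
    (S : ℕ → Ω → ℤ) (hS0 : ∀ ω, S 0 ω = 0)
    (hS : ∀ (j : ℕ) (ω : Ω), S (j + 1) ω = max (S j ω + X (j + 1) ω) 0) :
    (∀ x : ℕ,
      Tendsto (fun m : ℕ => (μ {ω | S (2 * m) ω = (x : ℤ)}).toReal) atTop
        (nhds ((q - p) * p ^ (2 * x) / q ^ (2 * x + 2)))) ∧
    (∀ z : ℝ, |z| ≤ 1 →
      ∑' x : ℕ, (q - p) * p ^ (2 * x) / q ^ (2 * x + 2) * z ^ x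
        = (q - p) / (q ^ 2 - p ^ 2 * z)) := by
  subst hq
  set q : ℝ := 1 - p with hq
  have hq0 : 0 < q := by rw [hq]; linarith
  have hpq' : p < q := by rw [hq]; linarith
  have hpqsum : p + q = 1 := by rw [hq]; ring
  set r : ℝ := p ^ 2 / q ^ 2 with hr
  have hr0 : 0 < r := by positivity
  have hr1 : r < 1 := by
    rw [hr, div_lt_one (by positivity)]
    nlinarith
  -- S is nonnegative
  have hSnn : ∀ j ω, (0 : ℤ) ≤ S j ω := by
    intro j ω
    cases j with
    | zero => rw [hS0]
    | succ j => rw [hS]; exact le_max_right _ _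
  -- S is measurable
  have hSmeas : ∀ j, Measurable (S j) := by
    intro j
    induction j with
    | zero =>
      have : S 0 = fun _ => (0 : ℤ) := funext hS0
      rw [this]; exact measurable_const
    | succ j ih =>
      have : S (j + 1) = fun ω => max (S j ω + X (j + 1) ω) 0 := funext (hS j)
      rw [this]
      exact (ih.add (hXmeas (j + 1))).max measurable_const
  -- the key one-step (two X's) recursion on tails, in ENNReal
  have key : ∀ (n : ℕ) (x : ℤ), 1 ≤ x → Odd (n + 1) →
      μ {ω | x ≤ S (n + 2) ω} =
        ENNReal.ofReal p * ENNReal.ofReal p * μ {ω | x - 1 ≤ S n ω}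
        + ENNReal.ofReal p * ENNReal.ofReal q * μ {ω | x ≤ S n ω}
        + ENNReal.ofReal q * ENNReal.ofReal p * μ {ω | x ≤ S n ω}
        + ENNReal.ofReal q * ENNReal.ofReal q * μ {ω | x + 1 ≤ S n ω} := by
    intro n x hx hodd
    have hevenidx : Even (n + 2) := by
      rcases hodd with ⟨k, hk⟩; exact ⟨k + 1, by omega⟩
    obtain ⟨hA1, hA0⟩ := hXodd (n + 1) hodd
    obtain ⟨hB0, hBm⟩ := hXeven (n + 2) (by omega) hevenidx
    -- splitting along the a.s. values of one X i
    have hsplit2 : ∀ (E : Set Ω), MeasurableSet E → ∀ (i : ℕ) (a b : ℤ), a ≠ b →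
        μ {ω | X i ω = a} + μ {ω | X i ω = b} = 1 →
        μ E = μ (E ∩ {ω | X i ω = a}) + μ (E ∩ {ω | X i ω = b}) := by
      intro E hE i a b hab hsum
      have hma : MeasurableSet {ω | X i ω = a} := hXmeas i (measurableSet_singleton a)
      have hmb : MeasurableSet {ω | X i ω = b} := hXmeas i (measurableSet_singleton b)
      have hd : Disjoint {ω | X i ω = a} {ω | X i ω = b} := by
        rw [Set.disjoint_left]
        intro ω h1 h2
        simp only [Set.mem_setOf_eq] at h1 h2
        exact hab (h1 ▸ h2 ▸ rfl)
      have hU : μ ({ω | X i ω = a} ∪ {ω | X i ω = b}) = 1 := by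
        rw [measure_union hd hmb, hsum]
      have hUc : μ ({ω | X i ω = a} ∪ {ω | X i ω = b})ᶜ = 0 := by
        rw [measure_compl (hma.union hmb) (measure_ne_top μ _), measure_univ, hU, tsub_self]
      have h1 : μ (E ∩ ({ω | X i ω = a} ∪ {ω | X i ω = b})) + μ (E \ ({ω | X i ω = a} ∪ {ω | X i ω = b})) = μ E :=
        measure_inter_add_diff E (hma.union hmb)
      have h2 : μ (E \ ({ω | X i ω = a} ∪ {ω | X i ω = b})) = 0 := by
        refine measure_mono_null ?_ hUc
        intro ω hω; exact hω.2
      have h3 : E ∩ ({ω | X i ω = a} ∪ {ω | X i ω = b})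
          = (E ∩ {ω | X i ω = a}) ∪ (E ∩ {ω | X i ω = b}) := Set.inter_union_distrib_left E _ _
      have h4 : μ ((E ∩ {ω | X i ω = a}) ∪ (E ∩ {ω | X i ω = b}))
          = μ (E ∩ {ω | X i ω = a}) + μ (E ∩ {ω | X i ω = b}) :=
        measure_union (hd.mono Set.inter_subset_right Set.inter_subset_right) (hE.inter hmb)
      rw [← h1, h2, add_zero, h3, h4]
    -- the deterministic description of the event
    have hmax : ∀ s a b : ℤ, 0 ≤ s → 0 ≤ a →
        (x ≤ max (max (s + a) 0 + b) 0 ↔ x - a - b ≤ s) := by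
      intro s a b hs ha
      rw [max_eq_left (by omega : (0:ℤ) ≤ s + a)]
      rcases max_cases (s + a + b) 0 with ⟨h1, h2⟩ | ⟨h1, h2⟩ <;> rw [h1] <;> omega
    have hset : ∀ (a b : ℤ), 0 ≤ a →
        {ω | x ≤ S (n + 2) ω} ∩ {ω | X (n + 1) ω = a} ∩ {ω | X (n + 2) ω = b}
        = {ω | x - a - b ≤ S n ω} ∩ ({ω | X (n + 1) ω = a} ∩ {ω | X (n + 2) ω = b}) := by
      intro a b ha
      ext ω
      simp only [Set.mem_inter_iff, Set.mem_setOf_eq]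
      rw [hS (n + 1) ω, hS n ω]
      constructor
      · rintro ⟨⟨h1, h2⟩, h3⟩
        rw [h2, h3] at h1
        exact ⟨(hmax _ a b (hSnn n ω) ha).1 h1, h2, h3⟩
      · rintro ⟨h1, h2, h3⟩
        refine ⟨⟨?_, h2⟩, h3⟩
        rw [h2, h3]
        exact (hmax _ a b (hSnn n ω) ha).2 h1
    -- independence
    have hindep := indep_biSup_compl (fun i => (hXmeas i).comap_le) hXindep.iIndep (Set.Iic n)
    rw [Indep_iff] at hindep
    have hSM : ∀ j, j ≤ n →
        Measurable[⨆ i ∈ Set.Iic n, MeasurableSpace.comap (X i) inferInstance] (S j) := by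
      intro j
      induction j with
      | zero =>
        intro _
        have h0 : S 0 = fun _ => (0 : ℤ) := funext hS0
        rw [h0]; exact measurable_const
      | succ j ih =>
        intro hj
        have hXj : Measurable[⨆ i ∈ Set.Iic n, MeasurableSpace.comap (X i) inferInstance]
            (X (j + 1)) :=
          measurable_iff_comap_le.2 (le_biSup (fun i => MeasurableSpace.comap (X i) inferInstance) (Set.mem_Iic.2 hj))
        have hstep : S (j + 1) = fun ω => max (S j ω + X (j + 1) ω) 0 := funext (hS j)
        rw [hstep]
        exact ((ih (by omega)).add hXj).max measurable_const
    have hXM : ∀ i, n < i →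
        Measurable[⨆ i ∈ (Set.Iic n)ᶜ, MeasurableSpace.comap (X i) inferInstance] (X i) := by
      intro i hi
      exact measurable_iff_comap_le.2 (le_biSup (fun i => MeasurableSpace.comap (X i) inferInstance)
        (by simp only [Set.mem_compl_iff, Set.mem_Iic, not_le]; omega))
    have hprod : ∀ (c a b : ℤ),
        μ ({ω | c ≤ S n ω} ∩ ({ω | X (n + 1) ω = a} ∩ {ω | X (n + 2) ω = b}))
          = μ {ω | c ≤ S n ω} * (μ {ω | X (n + 1) ω = a} * μ {ω | X (n + 2) ω = b}) := by
      intro c a b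
      have h1 : MeasurableSet[⨆ i ∈ Set.Iic n, MeasurableSpace.comap (X i) inferInstance]
          {ω | c ≤ S n ω} := (hSM n le_rfl) measurableSet_Ici
      have h2 : MeasurableSet[⨆ i ∈ (Set.Iic n)ᶜ, MeasurableSpace.comap (X i) inferInstance]
          ({ω | X (n + 1) ω = a} ∩ {ω | X (n + 2) ω = b}) :=
        ((hXM (n + 1) (by omega)) (measurableSet_singleton a)).inter
          ((hXM (n + 2) (by omega)) (measurableSet_singleton b))
      rw [hindep _ _ h1 h2]
      congr 1
      have hAB := hXindep.indepFun (show n + 1 ≠ n + 2 by omega)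
      exact hAB.measure_inter_preimage_eq_mul {a} {b} (measurableSet_singleton a) (measurableSet_singleton b)
    -- assembling
    have hE : MeasurableSet {ω | x ≤ S (n + 2) ω} := (hSmeas (n + 2)) measurableSet_Ici
    have hsumA : μ {ω | X (n + 1) ω = 1} + μ {ω | X (n + 1) ω = 0} = 1 := by
      rw [hA1, hA0, ← ENNReal.ofReal_add hp.le hq0.le, hpqsum, ENNReal.ofReal_one]
    have hsumB : μ {ω | X (n + 2) ω = 0} + μ {ω | X (n + 2) ω = -1} = 1 := by
      rw [hB0, hBm, ← ENNReal.ofReal_add hp.le hq0.le, hpqsum, ENNReal.ofReal_one]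
    have hm : ∀ (i : ℕ) (a : ℤ), MeasurableSet {ω | X i ω = a} :=
      fun i a => hXmeas i (measurableSet_singleton a)
    rw [hsplit2 {ω | x ≤ S (n + 2) ω} hE (n + 1) 1 0 (by norm_num) hsumA,
      hsplit2 ({ω | x ≤ S (n + 2) ω} ∩ {ω | X (n + 1) ω = 1}) (hE.inter (hm (n + 1) 1))
        (n + 2) 0 (-1) (by norm_num) hsumB,
      hsplit2 ({ω | x ≤ S (n + 2) ω} ∩ {ω | X (n + 1) ω = 0}) (hE.inter (hm (n + 1) 0))
        (n + 2) 0 (-1) (by norm_num) hsumB]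
    rw [hset 1 0 (by norm_num), hset 1 (-1) (by norm_num), hset 0 0 le_rfl, hset 0 (-1) le_rfl]
    have ec1 : {ω | x - 1 - 0 ≤ S n ω} = {ω | x - 1 ≤ S n ω} := by norm_num
    have ec2 : {ω | x - 1 - (-1) ≤ S n ω} = {ω | x ≤ S n ω} := by
      ext ω; simp only [Set.mem_setOf_eq]; omega
    have ec3 : {ω | x - 0 - 0 ≤ S n ω} = {ω | x ≤ S n ω} := by norm_num
    have ec4 : {ω | x - 0 - (-1) ≤ S n ω} = {ω | x + 1 ≤ S n ω} := by
      ext ω; simp only [Set.mem_setOf_eq]; omega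
    rw [ec1, ec2, ec3, ec4, hprod, hprod, hprod, hprod, hA1, hA0, hB0, hBm]
    ring
  -- real-valued tail function
  set F : ℕ → ℕ → ℝ := fun m x => (μ {ω | (x : ℤ) ≤ S (2 * m) ω}).toReal with hF
  have hFnonneg : ∀ m x, 0 ≤ F m x := fun m x => ENNReal.toReal_nonneg
  have hFle1 : ∀ m x, F m x ≤ 1 := by
    intro m x
    rw [hF]
    exact ENNReal.toReal_le_of_le_ofReal one_pos.le (by simpa using prob_le_one)
  have hF0 : ∀ m, F m 0 = 1 := by
    intro m
    show (μ {ω | ((0 : ℕ) : ℤ) ≤ S (2 * m) ω}).toReal = 1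
    have : {ω | ((0 : ℕ) : ℤ) ≤ S (2 * m) ω} = Set.univ := by
      ext ω; simpa using hSnn (2 * m) ω
    rw [this]; simp
  have hFzero : ∀ x : ℕ, F 0 (x + 1) = 0 := by
    intro x
    have : {ω | ((x + 1 : ℕ) : ℤ) ≤ S (2 * 0) ω} = ∅ := by
      ext ω
      simp only [Set.mem_setOf_eq, Set.mem_empty_iff_false, iff_false, not_le]
      rw [show 2 * 0 = 0 by ring, hS0]
      push_cast; omega
    show (μ {ω | ((x + 1 : ℕ) : ℤ) ≤ S (2 * 0) ω}).toReal = 0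
    rw [this]; simp
  have hrec : ∀ m x : ℕ, F (m + 1) (x + 1) =
      p ^ 2 * F m x + 2 * p * q * F m (x + 1) + q ^ 2 * F m (x + 2) := by
    intro m x
    have hodd : Odd (2 * m + 1) := ⟨m, by ring⟩
    have hk := key (2 * m) ((x : ℤ) + 1) (by omega) hodd
    have e1 : {ω | (x : ℤ) + 1 - 1 ≤ S (2 * m) ω} = {ω | ((x : ℕ) : ℤ) ≤ S (2 * m) ω} := by
      ext ω; simp only [Set.mem_setOf_eq]; omega
    have e2 : {ω | (x : ℤ) + 1 ≤ S (2 * m) ω} = {ω | ((x + 1 : ℕ) : ℤ) ≤ S (2 * m) ω} := by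
      ext ω; simp only [Set.mem_setOf_eq]; push_cast; omega
    have e3 : {ω | (x : ℤ) + 1 + 1 ≤ S (2 * m) ω} = {ω | ((x + 2 : ℕ) : ℤ) ≤ S (2 * m) ω} := by
      ext ω; simp only [Set.mem_setOf_eq]; push_cast; omega
    have e4 : {ω | (x : ℤ) + 1 ≤ S (2 * m + 2) ω} = {ω | ((x + 1 : ℕ) : ℤ) ≤ S (2 * (m + 1)) ω} := by
      ext ω; rw [show 2 * (m + 1) = 2 * m + 2 by ring]
      simp only [Set.mem_setOf_eq]; push_cast; omega
    rw [e1, e2, e3, e4] at hk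
    have hfin : ∀ s : Set Ω, μ s ≠ ⊤ := fun s => measure_ne_top μ s
    have t : ∀ (a b : ℝ) (s : Set Ω), ENNReal.ofReal a * ENNReal.ofReal b * μ s ≠ ⊤ :=
      fun a b s => ENNReal.mul_ne_top
        (ENNReal.mul_ne_top ENNReal.ofReal_ne_top ENNReal.ofReal_ne_top) (measure_ne_top μ s)
    show (μ {ω | ((x + 1 : ℕ) : ℤ) ≤ S (2 * (m + 1)) ω}).toReal = _
    rw [hk]
    rw [ENNReal.toReal_add (ENNReal.add_ne_top.2 ⟨ENNReal.add_ne_top.2 ⟨t _ _ _, t _ _ _⟩, t _ _ _⟩) (t _ _ _),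
        ENNReal.toReal_add (ENNReal.add_ne_top.2 ⟨t _ _ _, t _ _ _⟩) (t _ _ _),
        ENNReal.toReal_add (t _ _ _) (t _ _ _)]
    simp only [ENNReal.toReal_mul, ENNReal.toReal_ofReal hp.le, ENNReal.toReal_ofReal hq0.le]
    show _ = p ^ 2 * (μ {ω | ((x : ℕ) : ℤ) ≤ S (2 * m) ω}).toReal
      + 2 * p * q * (μ {ω | ((x + 1 : ℕ) : ℤ) ≤ S (2 * m) ω}).toReal
      + q ^ 2 * (μ {ω | ((x + 2 : ℕ) : ℤ) ≤ S (2 * m) ω}).toReal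
    ring
  -- monotonicity in m
  have hmono : ∀ m x, F m x ≤ F (m + 1) x := by
    intro m
    induction m with
    | zero =>
      intro x
      cases x with
      | zero => rw [hF0, hF0]
      | succ x => rw [hFzero]; exact hFnonneg 1 (x + 1)
    | succ m ih =>
      intro x
      cases x with
      | zero => rw [hF0, hF0]
      | succ x =>
        rw [hrec, hrec]
        have h1 := ih x
        have h2 := ih (x + 1)
        have h3 := ih (x + 2)
        have c1 : (0:ℝ) ≤ p ^ 2 := by positivity
        have c2 : (0:ℝ) ≤ 2 * p * q := by positivity
        have c3 : (0:ℝ) ≤ q ^ 2 := by positivity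
        nlinarith [mul_le_mul_of_nonneg_left h1 c1, mul_le_mul_of_nonneg_left h2 c2,
          mul_le_mul_of_nonneg_left h3 c3]
  have hsq : q ^ 2 + 2 * p * q + p ^ 2 = 1 := by
    have : q ^ 2 + 2 * p * q + p ^ 2 = (p + q) ^ 2 := by ring
    rw [this, hpqsum, one_pow]
  have hrid : ∀ x : ℕ, p ^ 2 * r ^ x + 2 * p * q * r ^ (x + 1) + q ^ 2 * r ^ (x + 2) = r ^ (x + 1) := by
    intro x
    have e1 : p ^ 2 = q ^ 2 * r := by rw [hr]; field_simp
    calc p ^ 2 * r ^ x + 2 * p * q * r ^ (x + 1) + q ^ 2 * r ^ (x + 2)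
        = (q ^ 2 + 2 * p * q + p ^ 2) * r ^ (x + 1) := by rw [e1]; ring
      _ = r ^ (x + 1) := by rw [hsq, one_mul]
  -- upper bound by the stationary tail
  have hub : ∀ m x, F m x ≤ r ^ x := by
    intro m
    induction m with
    | zero =>
      intro x
      cases x with
      | zero => rw [hF0]; norm_num
      | succ x => rw [hFzero]; positivity
    | succ m ih =>
      intro x
      cases x with
      | zero => rw [hF0]; norm_num
      | succ x =>
        rw [hrec]
        have h1 := mul_le_mul_of_nonneg_left (ih x) (by positivity : (0:ℝ) ≤ p ^ 2)
        have h2 := mul_le_mul_of_nonneg_left (ih (x + 1)) (by positivity : (0:ℝ) ≤ 2 * p * q)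
        have h3 := mul_le_mul_of_nonneg_left (ih (x + 2)) (by positivity : (0:ℝ) ≤ q ^ 2)
        linarith [hrid x]
  -- the limit function G
  have hFmono : ∀ x, Monotone fun m => F m x :=
    fun x => monotone_nat_of_le_succ (fun m => hmono m x)
  have hFbdd : ∀ x, BddAbove (Set.range fun m => F m x) :=
    fun x => ⟨1, by rintro _ ⟨m, rfl⟩; exact hFle1 m x⟩
  set G : ℕ → ℝ := fun x => ⨆ m, F m x with hG
  have hGtendsto : ∀ x, Tendsto (fun m => F m x) atTop (nhds (G x)) :=
    fun x => tendsto_atTop_ciSup (hFmono x) (hFbdd x)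
  have hG0 : G 0 = 1 := by
    rw [hG]; simp only [hF0]; exact ciSup_const
  have hGle : ∀ x, G x ≤ r ^ x := fun x => ciSup_le (fun m => hub m x)
  have hGnn : ∀ x, 0 ≤ G x := fun x => le_trans (hFnonneg 0 x) (le_ciSup (hFbdd x) 0)
  have hGrec : ∀ x, G (x + 1) = p ^ 2 * G x + 2 * p * q * G (x + 1) + q ^ 2 * G (x + 2) := by
    intro x
    have hL : Tendsto (fun m => F (m + 1) (x + 1)) atTop (nhds (G (x + 1))) :=
      (hGtendsto (x + 1)).comp (tendsto_add_atTop_nat 1)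
    have hR : Tendsto (fun m => p ^ 2 * F m x + 2 * p * q * F m (x + 1) + q ^ 2 * F m (x + 2))
        atTop (nhds (p ^ 2 * G x + 2 * p * q * G (x + 1) + q ^ 2 * G (x + 2))) :=
      (((hGtendsto x).const_mul _).add ((hGtendsto (x + 1)).const_mul _)).add
        ((hGtendsto (x + 2)).const_mul _)
    refine tendsto_nhds_unique hL ?_
    simpa only [hrec] using hR
  -- identify G with the stationary tail
  set D : ℕ → ℝ := fun x => r ^ x - G x with hD
  have hD0 : D 0 = 0 := by rw [hD]; simp [hG0]
  have hDnn : ∀ x, 0 ≤ D x := fun x => by rw [hD]; simp only [sub_nonneg]; exact hGle x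
  have hDub : ∀ x, D x ≤ r ^ x := fun x => by
    rw [hD]; simp only [sub_le_self_iff]; exact hGnn x
  have hDrec : ∀ x, q ^ 2 * (D (x + 2) - D (x + 1)) = p ^ 2 * (D (x + 1) - D x) := by
    intro x
    have h1 := hGrec x
    have h2 := hrid x
    simp only [hD]
    linear_combination h1 + h2 - (r ^ (x + 1) - G (x + 1)) * hsq
  have hDelta : ∀ x, D (x + 1) - D x = r ^ x * D 1 := by
    intro x
    induction x with
    | zero => rw [hD0]; simp
    | succ x ih =>
      have h1 : D (x + 2) - D (x + 1) = r * (D (x + 1) - D x) := by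
        have h2 := hDrec x
        rw [hr]
        field_simp
        linarith
      rw [h1, ih]; ring
  have hD1 : D 1 = 0 := by
    by_contra h
    have hposD : 0 < D 1 := lt_of_le_of_ne (hDnn 1) (Ne.symm h)
    have hmd : ∀ x : ℕ, D 1 ≤ D (x + 1) := by
      intro x
      induction x with
      | zero => exact le_refl _
      | succ x ih =>
        have h1 := hDelta (x + 1)
        nlinarith [pow_nonneg hr0.le (x + 1)]
    have hlim : Tendsto (fun x : ℕ => r ^ (x + 1)) atTop (nhds 0) :=
      (tendsto_pow_atTop_nhds_zero_of_lt_one hr0.le hr1).comp (tendsto_add_atTop_nat 1)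
    have := ge_of_tendsto hlim
      (Filter.Eventually.of_forall fun x => le_trans (hmd x) (hDub (x + 1)))
    linarith
  have hDall : ∀ x, D x = 0 := by
    intro x
    induction x with
    | zero => exact hD0
    | succ x ih =>
      have := hDelta x
      rw [hD1, ih] at this
      linarith [this]
  have hGeq : ∀ x, G x = r ^ x := by
    intro x
    have := hDall x
    rw [hD] at this
    simp only [sub_eq_zero] at this
    linarith [this]
  -- the point probabilities
  have hsplitpt : ∀ m x : ℕ, (μ {ω | S (2 * m) ω = (x : ℤ)}).toReal = F m x - F m (x + 1) := by
    intro m x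
    have hm1 : MeasurableSet {ω | ((x + 1 : ℕ) : ℤ) ≤ S (2 * m) ω} :=
      (hSmeas (2 * m)) measurableSet_Ici
    have hun : {ω | ((x : ℕ) : ℤ) ≤ S (2 * m) ω}
        = {ω | S (2 * m) ω = (x : ℤ)} ∪ {ω | ((x + 1 : ℕ) : ℤ) ≤ S (2 * m) ω} := by
      ext ω; simp only [Set.mem_setOf_eq, Set.mem_union]; push_cast; omega
    have hdisj : Disjoint {ω | S (2 * m) ω = (x : ℤ)} {ω | ((x + 1 : ℕ) : ℤ) ≤ S (2 * m) ω} := by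
      rw [Set.disjoint_left]
      intro ω h1 h2
      simp only [Set.mem_setOf_eq] at h1 h2
      rw [h1] at h2; push_cast at h2; omega
    have hmeq : μ {ω | ((x : ℕ) : ℤ) ≤ S (2 * m) ω}
        = μ {ω | S (2 * m) ω = (x : ℤ)} + μ {ω | ((x + 1 : ℕ) : ℤ) ≤ S (2 * m) ω} := by
      rw [hun, measure_union hdisj hm1]
    have hfin1 : μ {ω | S (2 * m) ω = (x : ℤ)} ≠ ⊤ := measure_ne_top μ _
    have hfin2 : μ {ω | ((x + 1 : ℕ) : ℤ) ≤ S (2 * m) ω} ≠ ⊤ := measure_ne_top μ _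
    have : F m x = (μ {ω | S (2 * m) ω = (x : ℤ)}).toReal + F m (x + 1) := by
      show (μ {ω | ((x : ℕ) : ℤ) ≤ S (2 * m) ω}).toReal = _
      rw [hmeq, ENNReal.toReal_add hfin1 hfin2]
    linarith
  have htendpt : ∀ x : ℕ, Tendsto (fun m : ℕ => (μ {ω | S (2 * m) ω = (x : ℤ)}).toReal)
      atTop (nhds (r ^ x - r ^ (x + 1))) := by
    intro x
    have h1 : Tendsto (fun m => F m x - F m (x + 1)) atTop (nhds (G x - G (x + 1))) :=
      (hGtendsto x).sub (hGtendsto (x + 1))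
    rw [hGeq, hGeq] at h1
    have he : (fun m : ℕ => (μ {ω | S (2 * m) ω = (x : ℤ)}).toReal)
        = fun m => F m x - F m (x + 1) := funext fun m => hsplitpt m x
    rw [he]
    exact h1
  have hqp : q ^ 2 - p ^ 2 = q - p := by
    have : q ^ 2 - p ^ 2 = (q - p) * (p + q) := by ring
    rw [this, hpqsum, mul_one]
  have hrpow : ∀ k : ℕ, r ^ k = p ^ (2 * k) / q ^ (2 * k) := by
    intro k
    rw [hr, div_pow, ← pow_mul, ← pow_mul]
  have honem : (1:ℝ) - r = (q - p) / q ^ 2 := by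
    rw [hr, eq_div_iff (by positivity : (q:ℝ) ^ 2 ≠ 0), sub_mul,
      div_mul_cancel₀ _ (by positivity : (q:ℝ) ^ 2 ≠ 0), one_mul]
    linarith [hqp]
  have htarget : ∀ x : ℕ, r ^ x - r ^ (x + 1) = (q - p) * p ^ (2 * x) / q ^ (2 * x + 2) := by
    intro x
    calc r ^ x - r ^ (x + 1) = r ^ x * (1 - r) := by ring
      _ = (p ^ (2 * x) / q ^ (2 * x)) * ((q - p) / q ^ 2) := by rw [hrpow, honem]
      _ = (q - p) * p ^ (2 * x) / q ^ (2 * x + 2) := by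
          rw [div_mul_div_comm, pow_add]; ring
  constructor
  · intro x
    have := htendpt x
    rw [htarget x] at this
    exact this
  · intro z hz
    have hq2pos : (0:ℝ) < q ^ 2 := by positivity
    have hden : 0 < q ^ 2 - p ^ 2 * z := by
      have h1 : p ^ 2 * z ≤ p ^ 2 * |z| :=
        mul_le_mul_of_nonneg_left (le_abs_self z) (by positivity)
      nlinarith [abs_nonneg z]
    set w : ℝ := p ^ 2 * z / q ^ 2 with hw
    have hwabs : |w| < 1 := by
      rw [hw, abs_div, abs_mul, abs_of_pos hq2pos, abs_of_pos (by positivity : (0:ℝ) < p ^ 2),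
        div_lt_one hq2pos]
      nlinarith [abs_nonneg z]
    have hterm : ∀ x : ℕ, (q - p) * p ^ (2 * x) / q ^ (2 * x + 2) * z ^ x
        = ((q - p) / q ^ 2) * w ^ x := by
      intro x
      rw [hw, div_pow, mul_pow]
      have e2 : (q:ℝ) ^ (2 * x + 2) = (q ^ 2) ^ x * q ^ 2 := by
        rw [← pow_mul, ← pow_add]
      have e3 : (p:ℝ) ^ (2 * x) = (p ^ 2) ^ x := by rw [← pow_mul]
      rw [e2, e3]
      field_simp
    calc ∑' x : ℕ, (q - p) * p ^ (2 * x) / q ^ (2 * x + 2) * z ^ x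
        = ∑' x : ℕ, ((q - p) / q ^ 2) * w ^ x := by exact tsum_congr hterm
      _ = ((q - p) / q ^ 2) * (1 - w)⁻¹ := by
          rw [tsum_mul_left, tsum_geometric_of_abs_lt_one hwabs]
      _ = (q - p) / (q ^ 2 - p ^ 2 * z) := by
          rw [hw]
          have h1 : (1 : ℝ) - p ^ 2 * z / q ^ 2 = (q ^ 2 - p ^ 2 * z) / q ^ 2 := by
            rw [sub_div, div_self (ne_of_gt hq2pos)]
          rw [h1, inv_div, div_mul_div_comm, mul_comm (q ^ 2) (q ^ 2 - p ^ 2 * z),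
            mul_div_mul_right _ _ (ne_of_gt hq2pos)]
end

section
/- Assume 0 < p < 1/2 (so p < q). Then the mean and second factorial moment of the reflected walk at the end of light cycles converge: lim_{m→∞} E(S_{2m}) = p²/(q - p), and lim_{m→∞} E(S_{2m}(S_{2m} - 1)) = 2p⁴/(q - p)². -/
open MeasureTheory ProbabilityTheory Filter

private lemma maxQueue_aux_sum_ite (N : ℕ) (n : ℤ) (w : ℕ → ℝ) (h0 : 0 ≤ n) (hN : n ≤ N) :
    ∑ k ∈ Finset.range N, (if ((k : ℤ) + 1 ≤ n) then w k else 0)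
      = ∑ k ∈ Finset.range n.toNat, w k := by
  have ha : n.toNat ≤ N := by omega
  rw [← Finset.sum_subset (Finset.range_subset_range.2 ha)
      (fun x hx hnx => by rw [if_neg]; have := Finset.mem_range.1 hx;
                          simp only [Finset.mem_range] at hnx; omega)]
  exact Finset.sum_congr rfl fun x hx => by
    rw [if_pos]; have := Finset.mem_range.1 hx; omega

private lemma maxQueue_aux_sum_two_mul (a : ℕ) :
    ∑ k ∈ Finset.range a, (2 * (k : ℝ)) = a * (a - 1) := by
  induction a with
  | zero => simp
  | succ n ih => rw [Finset.sum_range_succ, ih]; push_cast; ring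

/-- For 0 < p < 1/2 and the ℓ = 1 walk, E(S_{2m}) → p²/(q-p)
and E(S_{2m}(S_{2m}-1)) → 2p⁴/(q-p)². -/
theorem maxQueue_stationary_moments_ell_one
    (p q : ℝ) (hp : 0 < p) (hpq : p < 1 / 2) (hq : q = 1 - p)
    {Ω : Type*} [MeasurableSpace Ω] (μ : Measure Ω) [IsProbabilityMeasure μ]
    (X : ℕ → Ω → ℤ) (hXmeas : ∀ i, Measurable (X i))
    (hXindep : iIndepFun X μ)
    (hXodd : ∀ i : ℕ, Odd i →
      μ {ω | X i ω = 1} = ENNReal.ofReal p ∧ μ {ω | X i ω = 0} = ENNReal.ofReal q)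
    (hXeven : ∀ i : ℕ, 1 ≤ i → Even i →
      μ {ω | X i ω = 0} = ENNReal.ofReal p ∧ μ {ω | X i ω = -1} = ENNReal.ofReal q)
    (S : ℕ → Ω → ℤ) (hS0 : ∀ ω, S 0 ω = 0)
    (hS : ∀ (j : ℕ) (ω : Ω), S (j + 1) ω = max (S j ω + X (j + 1) ω) 0) :
    Tendsto (fun m : ℕ => ∫ ω, ((S (2 * m) ω : ℤ) : ℝ) ∂μ) atTop
      (nhds (p ^ 2 / (q - p))) ∧
    Tendsto (fun m : ℕ => ∫ ω, ((S (2 * m) ω : ℤ) : ℝ) * (((S (2 * m) ω : ℤ) : ℝ) - 1) ∂μ)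
      atTop (nhds (2 * p ^ 4 / (q - p) ^ 2)) := by
  subst hq
  have h1p : (0:ℝ) < 1 - p := by linarith
  have h12p : (0:ℝ) < 1 - p - p := by linarith
  set r : ℝ := p ^ 2 / (1 - p) ^ 2 with hrdef
  have hr0 : 0 ≤ r := by positivity
  have hr1 : r < 1 := by
    rw [hrdef, div_lt_one (by positivity)]; nlinarith
  have hpre : ∀ (i : ℕ) (c : ℤ), X i ⁻¹' {c} = {ω | X i ω = c} := fun i c => rfl
  -- measurability of S
  have hSmeas : ∀ j, Measurable (S j) := by
    intro j
    induction j with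
    | zero => simpa [funext hS0] using measurable_const
    | succ n ih =>
      have : S (n + 1) = fun ω => max (S n ω + X (n + 1) ω) 0 := funext (hS n)
      rw [this]
      exact (ih.add (hXmeas (n + 1))).max measurable_const
  have hSnonneg : ∀ j ω, 0 ≤ S j ω := by
    intro j ω
    cases j with
    | zero => rw [hS0]
    | succ n => rw [hS]; exact le_max_right _ _
  -- independence of S j and X (j+1)
  have hfactor : ∀ j, ∃ g : (↥(Finset.range (j+1)) → ℤ) → ℤ,
      Measurable g ∧ ∀ ω, S j ω = g (fun i => X i.1 ω) := by
    intro j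
    induction j with
    | zero => exact ⟨fun _ => 0, measurable_const, fun ω => hS0 ω⟩
    | succ n ih =>
      obtain ⟨g, hg, hgS⟩ := ih
      refine ⟨fun v => max (g (fun i =>
          v ⟨i.1, Finset.mem_range.mpr (Nat.lt_succ_of_lt (Finset.mem_range.mp i.2))⟩)
          + v ⟨n+1, Finset.self_mem_range_succ _⟩) 0, ?_, ?_⟩
      · exact ((hg.comp (measurable_pi_lambda _ fun i => measurable_pi_apply _)).add
          (measurable_pi_apply _)).max measurable_const
      · intro ω; rw [hS n ω, hgS ω]
  have hindep : ∀ j, IndepFun (S j) (X (j+1)) μ := by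
    intro j
    obtain ⟨g, hg, hgS⟩ := hfactor j
    have hdisj : Disjoint (Finset.range (j+1)) ({j+1} : Finset ℕ) := by
      simp [Finset.disjoint_left, Finset.mem_range]; omega
    have h := (hXindep.indepFun_finset (Finset.range (j+1)) {j+1} hdisj hXmeas).comp hg
        (measurable_pi_apply (⟨j+1, Finset.mem_singleton_self _⟩ : ({j+1} : Finset ℕ)))
    have e1 : S j = g ∘ (fun a (i : ↥(Finset.range (j+1))) => X i.1 a) := funext hgS
    rw [e1]
    exact h
  -- a.e. two-valuedness of X i
  have haeX : ∀ (i : ℕ) (c₁ c₂ : ℤ) (P Q : ℝ), 0 ≤ P → 0 ≤ Q → P + Q = 1 → c₁ ≠ c₂ →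
      μ (X i ⁻¹' {c₁}) = ENNReal.ofReal P → μ (X i ⁻¹' {c₂}) = ENNReal.ofReal Q →
      ∀ᵐ ω ∂μ, X i ω = c₁ ∨ X i ω = c₂ := by
    intro i c₁ c₂ P Q hP hQ hPQ hne h1 h2
    have hm1 : MeasurableSet (X i ⁻¹' {c₁}) := hXmeas _ (measurableSet_singleton _)
    have hm2 : MeasurableSet (X i ⁻¹' {c₂}) := hXmeas _ (measurableSet_singleton _)
    have hdisj12 : Disjoint (X i ⁻¹' {c₁}) (X i ⁻¹' {c₂}) := by
      rw [Set.disjoint_left]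
      intro ω hω1 hω2
      exact hne (by rw [← hω1, ← hω2])
    have hWfull : μ (X i ⁻¹' {c₁} ∪ X i ⁻¹' {c₂}) = 1 := by
      rw [measure_union hdisj12 hm2, h1, h2, ← ENNReal.ofReal_add hP hQ, hPQ,
        ENNReal.ofReal_one]
    have hcompl : μ (X i ⁻¹' {c₁} ∪ X i ⁻¹' {c₂})ᶜ = 0 := by
      rw [measure_compl (hm1.union hm2) (measure_ne_top μ _), hWfull, measure_univ, tsub_self]
    rw [ae_iff]
    convert hcompl using 2
    rfl
  -- the single-step recursion
  set t : ℕ → ℤ → ℝ := fun j a => (μ (S j ⁻¹' Set.Ici a)).toReal with htdef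
  have hstep : ∀ (j : ℕ) (c₁ c₂ : ℤ) (P Q : ℝ), 0 ≤ P → 0 ≤ Q →
      μ (X (j+1) ⁻¹' {c₁}) = ENNReal.ofReal P →
      μ (X (j+1) ⁻¹' {c₂}) = ENNReal.ofReal Q →
      P + Q = 1 → c₁ ≠ c₂ → ∀ a : ℤ, 0 < a →
      t (j+1) a = P * t j (a - c₁) + Q * t j (a - c₂) := by
    intro j c₁ c₂ P Q hP hQ h1 h2 hPQ hne a ha
    have hae := haeX (j+1) c₁ c₂ P Q hP hQ hPQ hne h1 h2
    have hm2 : MeasurableSet (X (j+1) ⁻¹' {c₂}) := hXmeas _ (measurableSet_singleton _)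
    have hset : S (j+1) ⁻¹' Set.Ici a =ᵐ[μ]
        ((((S j ⁻¹' Set.Ici (a - c₁)) ∩ (X (j+1) ⁻¹' {c₁})) ∪
        ((S j ⁻¹' Set.Ici (a - c₂)) ∩ (X (j+1) ⁻¹' {c₂}))) : Set Ω) := by
      rw [Filter.eventuallyEq_set]
      filter_upwards [hae] with ω hω
      simp only [Set.mem_union, Set.mem_inter_iff, Set.mem_preimage, Set.mem_Ici,
        Set.mem_singleton_iff]
      rw [hS j ω]
      have hmax : a ≤ max (S j ω + X (j+1) ω) 0 ↔ a ≤ S j ω + X (j+1) ω := by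
        rw [le_max_iff]; omega
      rw [hmax]
      rcases hω with h | h <;> rw [h] <;> omega
    have hprod1 : μ ((S j ⁻¹' Set.Ici (a - c₁)) ∩ (X (j+1) ⁻¹' {c₁}))
        = μ (S j ⁻¹' Set.Ici (a - c₁)) * ENNReal.ofReal P := by
      rw [(hindep j).measure_inter_preimage_eq_mul _ _ measurableSet_Ici
        (measurableSet_singleton _), h1]
    have hprod2 : μ ((S j ⁻¹' Set.Ici (a - c₂)) ∩ (X (j+1) ⁻¹' {c₂}))
        = μ (S j ⁻¹' Set.Ici (a - c₂)) * ENNReal.ofReal Q := by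
      rw [(hindep j).measure_inter_preimage_eq_mul _ _ measurableSet_Ici
        (measurableSet_singleton _), h2]
    have hdisjA : Disjoint ((S j ⁻¹' Set.Ici (a - c₁)) ∩ (X (j+1) ⁻¹' {c₁}))
        ((S j ⁻¹' Set.Ici (a - c₂)) ∩ (X (j+1) ⁻¹' {c₂})) := by
      rw [Set.disjoint_left]
      intro ω hω1 hω2
      exact hne (by rw [← hω1.2, ← hω2.2])
    show (μ (S (j+1) ⁻¹' Set.Ici a)).toReal = _
    rw [measure_congr hset, measure_union hdisjA ((hSmeas j measurableSet_Ici).inter hm2),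
      hprod1, hprod2, ENNReal.toReal_add (by finiteness) (by finiteness),
      ENNReal.toReal_mul, ENNReal.toReal_mul, ENNReal.toReal_ofReal hP,
      ENNReal.toReal_ofReal hQ]
    ring
  -- basic properties of t
  have htnonneg : ∀ j a, 0 ≤ t j a := fun j a => ENNReal.toReal_nonneg
  have htone : ∀ j a, a ≤ 0 → t j a = 1 := by
    intro j a ha
    have : S j ⁻¹' Set.Ici a = Set.univ :=
      Set.eq_univ_of_forall fun ω => le_trans ha (hSnonneg j ω)
    simp only [htdef, this, measure_univ, ENNReal.toReal_one]
  -- one-step recursions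
  have hodd : ∀ (m : ℕ) (a : ℤ), 0 < a →
      t (2*m+1) a = p * t (2*m) (a - 1) + (1 - p) * t (2*m) a := by
    intro m a ha
    obtain ⟨ho1, ho2⟩ := hXodd (2*m+1) ⟨m, by ring⟩
    have := hstep (2*m) 1 0 p (1-p) hp.le h1p.le
      (by rw [hpre]; exact ho1) (by rw [hpre]; exact ho2) (by ring) (by norm_num) a ha
    simpa using this
  have heven : ∀ (m : ℕ) (a : ℤ), 0 < a →
      t (2*m+2) a = p * t (2*m+1) a + (1 - p) * t (2*m+1) (a + 1) := by
    intro m a ha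
    obtain ⟨he1, he2⟩ := hXeven (2*m+2) (by omega) ⟨m+1, by ring⟩
    have := hstep (2*m+1) 0 (-1) p (1-p) hp.le h1p.le
      (by rw [hpre]; exact he1) (by rw [hpre]; exact he2) (by ring) (by norm_num) a ha
    simpa [sub_neg_eq_add] using this
  -- two-step recursion for F
  set F : ℕ → ℕ → ℝ := fun m k => t (2*m) (k : ℤ) with hFdef
  have hF0 : ∀ m, F m 0 = 1 := fun m => htone _ _ (by norm_num)
  have hFnonneg : ∀ m k, 0 ≤ F m k := fun m k => htnonneg _ _
  have hFrec : ∀ m k, F (m+1) (k+1)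
      = p^2 * F m k + 2*p*(1-p) * F m (k+1) + (1-p)^2 * F m (k+2) := by
    intro m k
    have ha : (0:ℤ) < (k:ℤ) + 1 := by positivity
    have ha2 : (0:ℤ) < (k:ℤ) + 2 := by positivity
    have h2 := heven m ((k:ℤ)+1) ha
    rw [show (k:ℤ)+1+1 = (k:ℤ)+2 by ring] at h2
    have h3 := hodd m ((k:ℤ)+1) ha
    rw [show (k:ℤ)+1-1 = (k:ℤ) by ring] at h3
    have h4 := hodd m ((k:ℤ)+2) ha2
    rw [show (k:ℤ)+2-1 = (k:ℤ)+1 by ring] at h4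
    have hidx : 2*(m+1) = 2*m+2 := by ring
    show t (2*(m+1)) ((k+1 : ℕ) : ℤ) = _
    rw [hidx]
    push_cast
    rw [h2, h3, h4]
    show _ = p^2 * t (2*m) ((k:ℕ):ℤ) + 2*p*(1-p) * t (2*m) (((k+1:ℕ)):ℤ)
      + (1-p)^2 * t (2*m) (((k+2:ℕ)):ℤ)
    push_cast
    ring
  have hFinit : ∀ k : ℕ, F 0 (k+1) = 0 := by
    intro k
    have : S 0 ⁻¹' Set.Ici ((k:ℤ)+1) = ∅ := by
      ext ω
      simp only [Set.mem_preimage, Set.mem_Ici, Set.mem_empty_iff_false, iff_false, not_le,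
        hS0 ω]
      omega
    show (μ (S 0 ⁻¹' Set.Ici ((k+1:ℕ):ℤ))).toReal = 0
    rw [show ((k+1:ℕ):ℤ) = (k:ℤ)+1 by push_cast; ring, this]
    simp
  -- a.e. upper bound on S
  have hXle1 : ∀ i : ℕ, ∀ᵐ ω ∂μ, X (i+1) ω ≤ 1 := by
    intro i
    rcases Nat.even_or_odd (i+1) with he | ho
    · obtain ⟨h1, h2⟩ := hXeven (i+1) (by omega) he
      filter_upwards [haeX (i+1) 0 (-1) p (1-p) hp.le h1p.le (by ring) (by norm_num)
        (by rw [hpre]; exact h1) (by rw [hpre]; exact h2)] with ω hω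
      rcases hω with h | h <;> rw [h] <;> norm_num
    · obtain ⟨h1, h2⟩ := hXodd (i+1) ho
      filter_upwards [haeX (i+1) 1 0 p (1-p) hp.le h1p.le (by ring) (by norm_num)
        (by rw [hpre]; exact h1) (by rw [hpre]; exact h2)] with ω hω
      rcases hω with h | h <;> rw [h] <;> norm_num
  have haeSle : ∀ j : ℕ, ∀ᵐ ω ∂μ, S j ω ≤ (j : ℤ) := by
    intro j
    induction j with
    | zero => filter_upwards with ω; rw [hS0]; norm_num
    | succ n ih =>
      filter_upwards [ih, hXle1 n] with ω h1 h2
      rw [hS]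
      rw [max_le_iff]
      constructor
      · push_cast; omega
      · positivity
  have hvanish : ∀ m k : ℕ, 2*m < k → F m k = 0 := by
    intro m k hk
    show (μ (S (2*m) ⁻¹' Set.Ici ((k:ℕ):ℤ))).toReal = 0
    have : μ (S (2*m) ⁻¹' Set.Ici ((k:ℕ):ℤ)) = 0 := by
      rw [measure_eq_zero_iff_ae_notMem]
      filter_upwards [haeSle (2*m)] with ω h
      simp only [Set.mem_preimage, Set.mem_Ici, not_le]
      omega
    rw [this]
    simp
  -- algebraic key identity
  have hkey : p^2 + 2*p*(1-p)*r + (1-p)^2*r^2 = r := by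
    rw [hrdef]
    field_simp
    ring
  have hrpow : ∀ k : ℕ, r^(k+1) = p^2 * r^k + 2*p*(1-p) * r^(k+1) + (1-p)^2 * r^(k+2) := by
    intro k
    calc r^(k+1) = (p^2 + 2*p*(1-p)*r + (1-p)^2*r^2) * r^k := by rw [hkey, pow_succ]; ring
    _ = p^2 * r^k + 2*p*(1-p) * r^(k+1) + (1-p)^2 * r^(k+2) := by ring
  -- monotonicity in m
  have hmono : ∀ m k, F m k ≤ F (m+1) k := by
    intro m
    induction m with
    | zero =>
      intro k
      cases k with
      | zero => rw [hF0, hF0]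
      | succ n => rw [hFinit n]; exact hFnonneg 1 (n+1)
    | succ n ih =>
      intro k
      cases k with
      | zero => rw [hF0, hF0]
      | succ l =>
        rw [hFrec n l, hFrec (n+1) l]
        have c1 : (0:ℝ) ≤ p^2 := sq_nonneg p
        have c2 : (0:ℝ) ≤ 2*p*(1-p) := by positivity
        have c3 : (0:ℝ) ≤ (1-p)^2 := sq_nonneg _
        exact add_le_add (add_le_add (mul_le_mul_of_nonneg_left (ih l) c1)
          (mul_le_mul_of_nonneg_left (ih (l+1)) c2))
          (mul_le_mul_of_nonneg_left (ih (l+2)) c3)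
  -- upper bound by r^k
  have hbound : ∀ m k, F m k ≤ r^k := by
    intro m
    induction m with
    | zero =>
      intro k
      cases k with
      | zero => rw [hF0]; norm_num
      | succ n => rw [hFinit n]; positivity
    | succ n ih =>
      intro k
      cases k with
      | zero => rw [hF0]; norm_num
      | succ l =>
        rw [hFrec n l, hrpow l]
        have c1 : (0:ℝ) ≤ p^2 := sq_nonneg p
        have c2 : (0:ℝ) ≤ 2*p*(1-p) := by positivity
        have c3 : (0:ℝ) ≤ (1-p)^2 := sq_nonneg _
        exact add_le_add (add_le_add (mul_le_mul_of_nonneg_left (ih l) c1)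
          (mul_le_mul_of_nonneg_left (ih (l+1)) c2))
          (mul_le_mul_of_nonneg_left (ih (l+2)) c3)
  -- the limit L
  have hbdd : ∀ k, BddAbove (Set.range fun m => F m k) := by
    intro k
    refine ⟨r^k, ?_⟩
    rintro x ⟨m, rfl⟩
    exact hbound m k
  set L : ℕ → ℝ := fun k => ⨆ m, F m k with hLdef
  have hLtend : ∀ k, Tendsto (fun m => F m k) atTop (nhds (L k)) := fun k =>
    tendsto_atTop_ciSup (monotone_nat_of_le_succ fun m => hmono m k) (hbdd k)
  have hL0 : L 0 = 1 := by
    rw [hLdef]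
    simp only
    rw [show (fun m => F m 0) = fun _ => (1:ℝ) from funext hF0]
    exact ciSup_const
  have hLle : ∀ k, L k ≤ r^k := fun k => ciSup_le fun m => hbound m k
  have hLnonneg : ∀ k, 0 ≤ L k := fun k => le_trans (hFnonneg 0 k) (le_ciSup (hbdd k) 0)
  have hLrec : ∀ k, L (k+1) = p^2 * L k + 2*p*(1-p) * L (k+1) + (1-p)^2 * L (k+2) := by
    intro k
    have h1 : Tendsto (fun m => F (m+1) (k+1)) atTop (nhds (L (k+1))) :=
      (hLtend (k+1)).comp (tendsto_add_atTop_nat 1)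
    have h2 : Tendsto (fun m => p^2 * F m k + 2*p*(1-p) * F m (k+1) + (1-p)^2 * F m (k+2))
        atTop (nhds (p^2 * L k + 2*p*(1-p) * L (k+1) + (1-p)^2 * L (k+2))) :=
      (((hLtend k).const_mul _).add ((hLtend (k+1)).const_mul _)).add
        ((hLtend (k+2)).const_mul _)
    refine tendsto_nhds_unique h1 (h2.congr fun m => ?_)
    exact (hFrec m k).symm
  -- solve the recurrence : L k = r^k
  have hLeq : ∀ k, L k = r^k := by
    set D : ℕ → ℝ := fun k => r^k - L k with hDdef
    have hD0 : D 0 = 0 := by simp [hDdef, hL0]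
    have hDnonneg : ∀ k, 0 ≤ D k := fun k => by simp [hDdef]; exact hLle k
    have hDle : ∀ k, D k ≤ r^k := fun k => by
      simp only [hDdef]
      have := hLnonneg k
      linarith
    have hDrec : ∀ k, D (k+1) = p^2 * D k + 2*p*(1-p) * D (k+1) + (1-p)^2 * D (k+2) := by
      intro k
      simp only [hDdef]
      linear_combination (hrpow k) - (hLrec k)
    have he : ∀ k, D (k+2) - D (k+1) = r * (D (k+1) - D k) := by
      intro k
      have h := hDrec k
      rw [hrdef]
      have h1pne : ((1:ℝ) - p) ^ 2 ≠ 0 := by positivity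
      field_simp
      nlinarith [h]
    have heclosed : ∀ k, D (k+1) - D k = r^k * D 1 := by
      intro k
      induction k with
      | zero => simp [hD0]
      | succ n ih => rw [he n, ih, pow_succ]; ring
    have hDclosed : ∀ k, D k = (∑ j ∈ Finset.range k, r^j) * D 1 := by
      intro k
      induction k with
      | zero => simp [hD0]
      | succ n ih =>
        have : D (n+1) = D n + r^n * D 1 := by
          have := heclosed n
          linarith
        rw [this, ih, Finset.sum_range_succ]
        ring
    have hD1 : D 1 = 0 := by
      refine le_antisymm ?_ (hDnonneg 1)
      have hle : ∀ k : ℕ, 1 ≤ k → D 1 ≤ r^k := by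
        intro k hk
        have hsum : (1:ℝ) ≤ ∑ j ∈ Finset.range k, r^j := by
          have := Finset.single_le_sum (f := fun j => r^j)
            (fun i _ => pow_nonneg hr0 i) (Finset.mem_range.2 (by omega : 0 < k))
          simpa using this
        calc D 1 ≤ (∑ j ∈ Finset.range k, r^j) * D 1 :=
              le_mul_of_one_le_left (hDnonneg 1) hsum
        _ = D k := (hDclosed k).symm
        _ ≤ r^k := hDle k
      have htend : Tendsto (fun k : ℕ => r^k) atTop (nhds 0) :=
        tendsto_pow_atTop_nhds_zero_of_lt_one hr0 hr1
      exact ge_of_tendsto htend (eventually_atTop.2 ⟨1, hle⟩)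
    intro k
    have := hDclosed k
    rw [hD1, mul_zero] at this
    simp only [hDdef] at this
    linarith
  have hLtendEq : ∀ k, Tendsto (fun m => F m k) atTop (nhds (r^k)) := by
    intro k
    rw [← hLeq k]
    exact hLtend k
  -- integral identities
  have hmeasIci : ∀ (m : ℕ) (k : ℕ), MeasurableSet (S (2*m) ⁻¹' Set.Ici ((k:ℤ)+1)) :=
    fun m k => hSmeas (2*m) measurableSet_Ici
  have hcast : ∀ k : ℕ, ((k+1:ℕ):ℤ) = (k:ℤ)+1 := fun k => by push_cast; ring
  have hint1 : ∀ m : ℕ, ∫ ω, ((S (2*m) ω : ℤ) : ℝ) ∂μ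
      = ∑ k ∈ Finset.range (2*m), F m (k+1) := by
    intro m
    have hrep : ∀ᵐ ω ∂μ, ((S (2*m) ω : ℤ) : ℝ)
        = ∑ k ∈ Finset.range (2*m),
            Set.indicator (S (2*m) ⁻¹' Set.Ici ((k:ℤ)+1)) (fun _ => (1:ℝ)) ω := by
      filter_upwards [haeSle (2*m)] with ω hω
      have h0 := hSnonneg (2*m) ω
      have hind : ∀ k:ℕ, Set.indicator (S (2*m) ⁻¹' Set.Ici ((k:ℤ)+1)) (fun _ => (1:ℝ)) ω
          = if ((k:ℤ)+1 ≤ S (2*m) ω) then (1:ℝ) else 0 := by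
        intro k
        classical
        rw [Set.indicator_apply]
        exact if_congr Iff.rfl rfl rfl
      rw [Finset.sum_congr rfl (fun k _ => hind k),
        maxQueue_aux_sum_ite (2*m) (S (2*m) ω) (fun _ => (1:ℝ)) h0 (by exact_mod_cast hω)]
      simp only [Finset.sum_const, Finset.card_range, nsmul_eq_mul, mul_one]
      have := Int.toNat_of_nonneg h0
      exact_mod_cast this.symm
    rw [integral_congr_ae hrep, integral_finset_sum _
      (fun k _ => (integrable_const (1:ℝ)).indicator (hmeasIci m k))]
    refine Finset.sum_congr rfl fun k _ => ?_
    rw [integral_indicator_const (1:ℝ) (hmeasIci m k), smul_eq_mul, mul_one]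
    show _ = t (2*m) ((k+1:ℕ):ℤ)
    rw [hcast k]
    rfl
  have hint2 : ∀ m : ℕ, ∫ ω, ((S (2*m) ω : ℤ):ℝ) * (((S (2*m) ω : ℤ):ℝ) - 1) ∂μ
      = ∑ k ∈ Finset.range (2*m), 2*(k:ℝ) * F m (k+1) := by
    intro m
    have hrep : ∀ᵐ ω ∂μ, ((S (2*m) ω : ℤ):ℝ) * (((S (2*m) ω : ℤ):ℝ) - 1)
        = ∑ k ∈ Finset.range (2*m),
            Set.indicator (S (2*m) ⁻¹' Set.Ici ((k:ℤ)+1)) (fun _ => 2*(k:ℝ)) ω := by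
      filter_upwards [haeSle (2*m)] with ω hω
      have h0 := hSnonneg (2*m) ω
      have hind : ∀ k:ℕ, Set.indicator (S (2*m) ⁻¹' Set.Ici ((k:ℤ)+1)) (fun _ => 2*(k:ℝ)) ω
          = if ((k:ℤ)+1 ≤ S (2*m) ω) then 2*(k:ℝ) else 0 := by
        intro k
        classical
        rw [Set.indicator_apply]
        exact if_congr Iff.rfl rfl rfl
      rw [Finset.sum_congr rfl (fun k _ => hind k),
        maxQueue_aux_sum_ite (2*m) (S (2*m) ω) (fun k => 2*(k:ℝ)) h0 (by exact_mod_cast hω),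
        maxQueue_aux_sum_two_mul]
      have h1 : (((S (2*m) ω).toNat : ℤ) : ℝ) = ((S (2*m) ω : ℤ) : ℝ) := by
        exact_mod_cast congrArg (fun z : ℤ => (z:ℝ)) (Int.toNat_of_nonneg h0)
      push_cast at h1 ⊢
      rw [h1]
    rw [integral_congr_ae hrep, integral_finset_sum _
      (fun (k:ℕ) _ => (integrable_const (2*(k:ℝ))).indicator (hmeasIci m k))]
    refine Finset.sum_congr rfl fun k _ => ?_
    rw [integral_indicator_const (2*(k:ℝ)) (hmeasIci m k), smul_eq_mul]
    have : μ.real (S (2*m) ⁻¹' Set.Ici ((k:ℤ)+1)) = F m (k+1) := by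
      show _ = t (2*m) ((k+1:ℕ):ℤ)
      rw [hcast k]
      rfl
    rw [this]
    ring
  -- tsum forms
  have hts1 : ∀ m : ℕ, ∑ k ∈ Finset.range (2*m), F m (k+1) = ∑' k : ℕ, F m (k+1) := by
    intro m
    exact (tsum_eq_sum (fun k hk => hvanish m (k+1)
      (by simp only [Finset.mem_range] at hk; omega))).symm
  have hts2 : ∀ m : ℕ, ∑ k ∈ Finset.range (2*m), 2*(k:ℝ) * F m (k+1)
      = ∑' k : ℕ, 2*(k:ℝ) * F m (k+1) := by
    intro m
    refine (tsum_eq_sum (fun k hk => ?_)).symm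
    rw [hvanish m (k+1) (by simp only [Finset.mem_range] at hk; omega)]
    ring
  -- summability of bounds
  have hsum1 : Summable (fun k : ℕ => r^(k+1)) := by
    refine ((summable_geometric_of_lt_one hr0 hr1).mul_left r).congr fun k => ?_
    rw [pow_succ]; ring
  have hsumk : Summable (fun k : ℕ => (k:ℝ) * r^k) := by
    have := summable_pow_mul_geometric_of_norm_lt_one (R := ℝ) 1
      (by rwa [Real.norm_eq_abs, abs_of_nonneg hr0])
    simpa using this
  have hsum2 : Summable (fun k : ℕ => 2*(k:ℝ) * r^(k+1)) := by
    refine (hsumk.mul_left (2*r)).congr fun k => ?_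
    rw [pow_succ]; ring
  -- dominated convergence
  have hT1 : Tendsto (fun m => ∑' k : ℕ, F m (k+1)) atTop (nhds (∑' k : ℕ, r^(k+1))) := by
    refine tendsto_tsum_of_dominated_convergence hsum1 (fun k => hLtendEq (k+1)) ?_
    filter_upwards with m k
    rw [Real.norm_eq_abs, abs_of_nonneg (hFnonneg _ _)]
    exact hbound m (k+1)
  have hT2 : Tendsto (fun m => ∑' k : ℕ, 2*(k:ℝ) * F m (k+1)) atTop
      (nhds (∑' k : ℕ, 2*(k:ℝ) * r^(k+1))) := by
    refine tendsto_tsum_of_dominated_convergence hsum2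
      (fun k => (hLtendEq (k+1)).const_mul (2*(k:ℝ))) ?_
    filter_upwards with m k
    rw [Real.norm_eq_abs, abs_of_nonneg (mul_nonneg (by positivity) (hFnonneg _ _))]
    exact mul_le_mul_of_nonneg_left (hbound m (k+1)) (by positivity)
  -- values of the limit sums
  have hA : ((1:ℝ)-p) ≠ 0 := ne_of_gt h1p
  have hB : ((1:ℝ)-p-p) ≠ 0 := ne_of_gt h12p
  have h1r : (1:ℝ) - r = (1-p-p)/(1-p)^2 := by
    rw [hrdef]; field_simp; ring
  have hval1 : (∑' k : ℕ, r^(k+1)) = p^2 / (1 - p - p) := by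
    have hg : (∑' k : ℕ, r^k) = (1-r)⁻¹ := tsum_geometric_of_lt_one hr0 hr1
    have h2 : (∑' k : ℕ, r^(k+1)) = r * (1-r)⁻¹ := by
      rw [← hg, ← tsum_mul_left]
      exact tsum_congr fun k => by rw [pow_succ]; ring
    rw [h2, h1r, hrdef, inv_div]
    first
    | (field_simp; ring)
    | field_simp
  have hval2 : (∑' k : ℕ, 2*(k:ℝ) * r^(k+1)) = 2 * p^4 / (1 - p - p)^2 := by
    have hg : (∑' k : ℕ, (k:ℝ) * r^k) = r / (1-r)^2 :=
      tsum_coe_mul_geometric_of_norm_lt_one (by rwa [Real.norm_eq_abs, abs_of_nonneg hr0])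
    have h2 : (∑' k : ℕ, 2*(k:ℝ) * r^(k+1)) = (2*r) * (r/(1-r)^2) := by
      rw [← hg, ← tsum_mul_left]
      exact tsum_congr fun k => by rw [pow_succ]; ring
    rw [h2, h1r, hrdef]
    first
    | (field_simp; ring)
    | field_simp
  constructor
  · rw [show (fun m : ℕ => ∫ ω, ((S (2*m) ω : ℤ):ℝ) ∂μ)
        = fun m => ∑' k : ℕ, F m (k+1) from funext fun m => (hint1 m).trans (hts1 m),
      ← hval1]
    exact hT1
  · rw [show (fun m : ℕ => ∫ ω, ((S (2*m) ω : ℤ):ℝ) * (((S (2*m) ω : ℤ):ℝ) - 1) ∂μ)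
        = fun m => ∑' k : ℕ, 2*(k:ℝ) * F m (k+1) from
        funext fun m => (hint2 m).trans (hts2 m),
      ← hval2]
    exact hT2
end

section
/- Assume 0 < p < 1/2 (so p < q). For the traffic-light cycle RRGG (ℓ = 2), the mean of the reflected walk at the end of light cycles converges: lim_{m→∞} E(S_{4m}) = (1/4)·[ -4 + 2(q - p) + 1/(q - p) + √(1 + 4pq) ]. -/
open MeasureTheory ProbabilityTheory Filter

open Filter

namespace MaxQueueAux

/-! ### Deterministic tail recursion -/

noncomputable def uSeq (p q : ℝ) : ℕ → ℤ → ℝ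
  | 0 => fun k => if k ≤ 0 then 1 else 0
  | (j+1) => fun k => if k ≤ 0 then 1 else
      if (j+1) % 4 = 1 ∨ (j+1) % 4 = 2 then p * uSeq p q j (k-1) + q * uSeq p q j k
      else p * uSeq p q j k + q * uSeq p q j (k+1)

variable {p q : ℝ}

lemma uSeq_nonpos (j : ℕ) {k : ℤ} (hk : k ≤ 0) : uSeq p q j k = 1 := by
  cases j <;> simp [uSeq, hk]

lemma uSeq_red (j : ℕ) (hj : (j+1) % 4 = 1 ∨ (j+1) % 4 = 2) {k : ℤ} (hk : 1 ≤ k) :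
    uSeq p q (j+1) k = p * uSeq p q j (k-1) + q * uSeq p q j k := by
  have : ¬ k ≤ 0 := by omega
  simp [uSeq, this, hj]

lemma uSeq_red' (hpq1 : p + q = 1) (j : ℕ) (hj : (j+1) % 4 = 1 ∨ (j+1) % 4 = 2) (k : ℤ) :
    uSeq p q (j+1) k = p * uSeq p q j (k-1) + q * uSeq p q j k := by
  rcases le_or_gt k 0 with hk | hk
  · rw [uSeq_nonpos _ hk, uSeq_nonpos j (by omega), uSeq_nonpos j hk]; linarith
  · exact uSeq_red j hj hk

lemma uSeq_green (j : ℕ) (hj : ¬ ((j+1) % 4 = 1 ∨ (j+1) % 4 = 2)) {k : ℤ} (hk : 1 ≤ k) :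
    uSeq p q (j+1) k = p * uSeq p q j k + q * uSeq p q j (k+1) := by
  have : ¬ k ≤ 0 := by omega
  simp [uSeq, this, hj]

lemma uSeq_nonneg (hp : 0 ≤ p) (hq : 0 ≤ q) (j : ℕ) (k : ℤ) : 0 ≤ uSeq p q j k := by
  induction j generalizing k with
  | zero => dsimp [uSeq]; split <;> norm_num
  | succ j ih =>
      dsimp [uSeq]; split
      · norm_num
      · split
        · exact add_nonneg (mul_nonneg hp (ih _)) (mul_nonneg hq (ih _))
        · exact add_nonneg (mul_nonneg hp (ih _)) (mul_nonneg hq (ih _))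

lemma uSeq_le_one (hp : 0 ≤ p) (hq : 0 ≤ q) (hpq1 : p + q = 1) (j : ℕ) (k : ℤ) :
    uSeq p q j k ≤ 1 := by
  induction j generalizing k with
  | zero => dsimp [uSeq]; split <;> norm_num
  | succ j ih =>
      dsimp [uSeq]; split
      · exact le_rfl
      · split
        · nlinarith [ih (k-1), ih k, uSeq_nonneg hp hq j (k-1), uSeq_nonneg hp hq j k]
        · nlinarith [ih k, ih (k+1), uSeq_nonneg hp hq j k, uSeq_nonneg hp hq j (k+1)]

lemma uSeq_eq_zero (j : ℕ) {k : ℤ} (hk : (j : ℤ) < k) : uSeq p q j k = 0 := by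
  induction j generalizing k with
  | zero => dsimp [uSeq]; rw [if_neg (by omega)]
  | succ j ih =>
      have hk1 : 1 ≤ k := by omega
      by_cases hj : (j+1) % 4 = 1 ∨ (j+1) % 4 = 2
      · rw [uSeq_red j hj hk1, ih (by push_cast; omega), ih (by push_cast; omega)]; ring
      · rw [uSeq_green j hj hk1, ih (by push_cast; omega), ih (by push_cast; omega)]; ring

lemma uSeq_mono (hp : 0 ≤ p) (hq : 0 ≤ q) (hpq1 : p + q = 1) (j : ℕ) (k : ℤ) :
    uSeq p q j k ≤ uSeq p q (j+4) k := by
  induction j generalizing k with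
  | zero =>
      rcases le_or_gt k 0 with hk | hk
      · rw [uSeq_nonpos _ hk, uSeq_nonpos _ hk]
      · rw [uSeq_eq_zero 0 (by exact_mod_cast hk)]
        exact uSeq_nonneg hp hq 4 k
  | succ j ih =>
      have hmod : (j+5) % 4 = (j+1) % 4 := by omega
      rcases le_or_gt k 0 with hk | hk
      · rw [uSeq_nonpos _ hk, uSeq_nonpos _ hk]
      · by_cases hj : (j+1) % 4 = 1 ∨ (j+1) % 4 = 2
        · rw [uSeq_red j hj hk, show j+1+4 = (j+4)+1 from by ring,
            uSeq_red (j+4) (by omega) hk]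
          have := ih (k-1); have := ih k
          nlinarith [ih (k-1), ih k]
        · rw [uSeq_green j hj hk, show j+1+4 = (j+4)+1 from by ring,
            uSeq_green (j+4) (by omega) hk]
          nlinarith [ih k, ih (k+1)]

lemma uSeq_cycle (hpq1 : p + q = 1) (m : ℕ) {k : ℤ} (hk : 1 ≤ k) :
    uSeq p q (4*(m+1)) k =
      q^4 * uSeq p q (4*m) (k+2) + 4*p*q^3 * uSeq p q (4*m) (k+1)
        + 6*p^2*q^2 * uSeq p q (4*m) k + 4*p^3*q * uSeq p q (4*m) (k-1)
        + p^4 * uSeq p q (4*m) (k-2) := by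
  have e4 : 4*(m+1) = (4*m+3)+1 := by ring
  have e3 : 4*m+3 = (4*m+2)+1 := by ring
  have e2 : 4*m+2 = (4*m+1)+1 := by ring
  have e1 : 4*m+1 = (4*m)+1 := by ring
  have h4 : uSeq p q (4*(m+1)) k
      = p * uSeq p q (4*m+3) k + q * uSeq p q (4*m+3) (k+1) := by
    rw [e4]; exact uSeq_green _ (by omega) hk
  have h3 : ∀ j : ℤ, 1 ≤ j → uSeq p q (4*m+3) j
      = p * uSeq p q (4*m+2) j + q * uSeq p q (4*m+2) (j+1) := by
    intro j hj; rw [e3]; exact uSeq_green _ (by omega) hj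
  have h2 : ∀ j : ℤ, uSeq p q (4*m+2) j
      = p * uSeq p q (4*m+1) (j-1) + q * uSeq p q (4*m+1) j := by
    intro j; rw [e2]; exact uSeq_red' hpq1 _ (by omega) j
  have h1 : ∀ j : ℤ, uSeq p q (4*m+1) j
      = p * uSeq p q (4*m) (j-1) + q * uSeq p q (4*m) j := by
    intro j; rw [e1]; exact uSeq_red' hpq1 _ (by omega) j
  rw [h4, h3 k hk, h3 (k+1) (by omega)]
  simp only [h2]
  simp only [show k+1-1 = k from by ring, show k+1+1 = k+2 from by ring,
    show k+2-1 = k+1 from by ring]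
  simp only [h1]
  simp only [show k-1-1 = k-2 from by ring, show k+1-1 = k from by ring,
    show k+2-1 = k+1 from by ring]
  ring

end MaxQueueAux

namespace MaxQueueAux


noncomputable def sD (p q : ℝ) : ℝ := Real.sqrt (1 + 4*p*q)
noncomputable def r1 (p q : ℝ) : ℝ := p^2 / q^2
noncomputable def r2 (p q : ℝ) : ℝ := (sD p q - (1 + 2*p*q)) / (2*q^2)
noncomputable def c1 (p q : ℝ) : ℝ := (1 + (q - p) * sD p q) / (4*q^2)
noncomputable def c2 (p q : ℝ) : ℝ := 1 - c1 p q
noncomputable def gF (p q : ℝ) (k : ℤ) : ℝ := c1 p q * r1 p q ^ k + c2 p q * r2 p q ^ k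
noncomputable def hF (p q : ℝ) (k : ℤ) : ℝ := if k ≤ 0 then 1 else gF p q k

variable {p q : ℝ} (hp : 0 < p) (hpq : p < 1/2) (hq : q = 1 - p)

section Facts
include hp hpq hq

lemma hq0 : 0 < q := by subst hq; linarith

lemma hpltq : p < q := by subst hq; linarith

lemma sD_sq : (sD p q)^2 = 1 + 4*p*q := by
  rw [sD, Real.sq_sqrt]; nlinarith [hq0 hp hpq hq]

lemma sD_pos : 0 < sD p q := by
  rw [sD]; apply Real.sqrt_pos.2; nlinarith [hq0 hp hpq hq]

lemma sD_gt_one : 1 < sD p q := by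
  have h2 := sD_sq hp hpq hq
  have h0 := sD_pos hp hpq hq
  have hq' := hq0 hp hpq hq
  have : (1:ℝ)^2 < (sD p q)^2 := by rw [h2]; nlinarith
  exact lt_of_pow_lt_pow_left₀ 2 (le_of_lt h0) this

lemma sD_lt : sD p q < 1 + 2*p*q := by
  rw [sD]
  have h0 : 0 < q := hq0 hp hpq hq
  apply (Real.sqrt_lt' (by nlinarith)).2
  nlinarith [pow_pos (mul_pos hp h0) 2]

lemma r1_pos : 0 < r1 p q := by
  have := hq0 hp hpq hq; rw [r1]; positivity

lemma r1_lt_one : r1 p q < 1 := by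
  have h0 := hq0 hp hpq hq
  have := hpltq hp hpq hq
  rw [r1, div_lt_one (by positivity)]
  nlinarith

lemma r2_neg : r2 p q < 0 := by
  have h0 := hq0 hp hpq hq
  have := sD_lt hp hpq hq
  rw [r2]
  apply div_neg_of_neg_of_pos (by linarith) (by positivity)

lemma neg_r2_lt_r1 : -r2 p q < r1 p q := by
  have h0 := hq0 hp hpq hq
  have hs2 := sD_sq hp hpq hq
  have hs0 := sD_pos hp hpq hq
  have hlt : 1 + 2*p*q - 2*p^2 < sD p q := by
    have ha : (0:ℝ) < 1 + 2*p*q - 2*p^2 := by nlinarith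
    have : (1 + 2*p*q - 2*p^2)^2 < (sD p q)^2 := by
      rw [hs2]; subst hq
      nlinarith [mul_pos (pow_pos hp 3) (show (0:ℝ) < 1 - p by linarith)]
    exact lt_of_pow_lt_pow_left₀ 2 (le_of_lt hs0) this
  rw [r2, r1, show -((sD p q - (1+2*p*q))/(2*q^2)) = ((1+2*p*q) - sD p q)/(2*q^2) from by
    ring, div_lt_div_iff₀ (by positivity) (by positivity)]
  nlinarith [mul_lt_mul_of_pos_right (show 1+2*p*q - sD p q < 2*p^2 by linarith)
    (pow_pos h0 2)]

lemma abs_r2_lt_r1 : |r2 p q| < r1 p q := by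
  rw [abs_of_neg (r2_neg hp hpq hq)]; exact neg_r2_lt_r1 hp hpq hq

lemma c1_gt_half : 1/2 < c1 p q := by
  have h0 := hq0 hp hpq hq
  have h1 := sD_gt_one hp hpq hq
  have h2 := hpltq hp hpq hq
  rw [c1, lt_div_iff₀ (by positivity)]
  nlinarith

lemma c1_lt_one : c1 p q < 1 := by
  have h0 := hq0 hp hpq hq
  have h1 := sD_lt hp hpq hq
  have h2 := hpltq hp hpq hq
  have h3 := sD_pos hp hpq hq
  rw [c1, div_lt_one (by positivity)]
  nlinarith

lemma r1_ne : r1 p q ≠ 0 := ne_of_gt (r1_pos hp hpq hq)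
lemma r2_ne : r2 p q ≠ 0 := ne_of_lt (r2_neg hp hpq hq)

lemma key1 : q^4 * r1 p q^4 + 4*p*q^3 * r1 p q^3 + 6*p^2*q^2 * r1 p q^2
    + 4*p^3*q * r1 p q + p^4 = r1 p q^2 := by
  have h0 : (0:ℝ) < q := hq0 hp hpq hq
  have e : q * r1 p q + p = p / q := by
    rw [r1]; subst hq; field_simp; ring
  have e4 : (q * r1 p q + p)^4 = (r1 p q)^2 := by
    rw [e, r1]; field_simp
  linear_combination e4

lemma key2 : q^4 * r2 p q^4 + 4*p*q^3 * r2 p q^3 + 6*p^2*q^2 * r2 p q^2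
    + 4*p^3*q * r2 p q + p^4 = r2 p q^2 := by
  have h0 : (0:ℝ) < q := hq0 hp hpq hq
  have hs2 := sD_sq hp hpq hq
  have e : q * r2 p q + p = (sD p q - 1) / (2*q) := by
    rw [r2]; field_simp; ring
  have e2 : (q * r2 p q + p)^2 = - r2 p q := by
    rw [e, div_pow, r2,
      show (sD p q - 1)^2 = 2 + 4*p*q - 2*sD p q from by linear_combination hs2]
    field_simp; ring
  have e4 : (q * r2 p q + p)^4 = (r2 p q)^2 := by
    calc (q * r2 p q + p)^4 = ((q * r2 p q + p)^2)^2 := by ring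
      _ = (r2 p q)^2 := by rw [e2]; ring
  linear_combination e4

lemma gF_zero : gF p q 0 = 1 := by simp [gF, c2]

lemma gF_neg_one : gF p q (-1) = 1 := by
  have h0 := hq0 hp hpq hq
  have hs2 := sD_sq hp hpq hq
  have hr1 := r1_ne hp hpq hq
  have hr2 := r2_ne hp hpq hq
  have key : c1 p q * r2 p q + c2 p q * r1 p q = r1 p q * r2 p q := by
    rw [c1, c2, c1, r1, r2] at *
    subst hq
    field_simp
    linear_combination (1 - 2*p) * hs2
  rw [gF, zpow_neg_one, zpow_neg_one]
  field_simp
  linear_combination key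

lemma gF_rec (k : ℤ) : gF p q k
    = q^4 * gF p q (k+2) + 4*p*q^3 * gF p q (k+1) + 6*p^2*q^2 * gF p q k
      + 4*p^3*q * gF p q (k-1) + p^4 * gF p q (k-2) := by
  have hr1 := r1_ne hp hpq hq
  have hr2 := r2_ne hp hpq hq
  have hz : ∀ (r : ℝ), r ≠ 0 → ∀ j : ℕ, r ^ (k - 2 + (j:ℤ)) = r ^ (k-2) * r ^ j := by
    intro r hr j; rw [zpow_add₀ hr, zpow_natCast]
  have k2 : k + 2 = k - 2 + ((4:ℕ):ℤ) := by push_cast; ring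
  have k1 : k + 1 = k - 2 + ((3:ℕ):ℤ) := by push_cast; ring
  have k0 : k = k - 2 + ((2:ℕ):ℤ) := by push_cast; ring
  have km1 : k - 1 = k - 2 + ((1:ℕ):ℤ) := by push_cast; ring
  have km2 : k - 2 = k - 2 + ((0:ℕ):ℤ) := by push_cast; ring
  have gk : ∀ (j : ℕ) (m : ℤ), m = k - 2 + (j:ℤ) → gF p q m
      = c1 p q * (r1 p q ^ (k-2) * r1 p q ^ j) + c2 p q * (r2 p q ^ (k-2) * r2 p q ^ j) := by
    intro j m hm; rw [gF, hm, hz _ hr1, hz _ hr2]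
  rw [gk 4 (k+2) (by push_cast; ring), gk 3 (k+1) (by push_cast; ring),
    gk 2 k (by push_cast; ring), gk 1 (k-1) (by push_cast; ring),
    gk 0 (k-2) (by push_cast; ring)]
  linear_combination (-(c1 p q * r1 p q ^ (k-2))) * key1 hp hpq hq
    + (-(c2 p q * r2 p q ^ (k-2))) * key2 hp hpq hq

lemma hF_eq_gF {k : ℤ} (hk : -1 ≤ k) : hF p q k = gF p q k := by
  rcases lt_or_ge 0 k with h | h
  · rw [hF, if_neg (by omega)]
  · interval_cases k
    · rw [hF, if_pos (by omega), gF_neg_one hp hpq hq]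
    · rw [hF, if_pos le_rfl, gF_zero hp hpq hq]

lemma hF_rec {k : ℤ} (hk : 1 ≤ k) : hF p q k
    = q^4 * hF p q (k+2) + 4*p*q^3 * hF p q (k+1) + 6*p^2*q^2 * hF p q k
      + 4*p^3*q * hF p q (k-1) + p^4 * hF p q (k-2) := by
  rw [hF_eq_gF hp hpq hq (by omega), hF_eq_gF hp hpq hq (by omega),
    hF_eq_gF hp hpq hq (by omega), hF_eq_gF hp hpq hq (by omega),
    hF_eq_gF hp hpq hq (by omega)]
  exact gF_rec hp hpq hq k

lemma gF_nat_bounds (n : ℕ) : 0 ≤ gF p q (n:ℤ) ∧ gF p q (n:ℤ) ≤ r1 p q ^ n := by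
  have h1 := c1_gt_half hp hpq hq
  have h2 := c1_lt_one hp hpq hq
  have habs := abs_r2_lt_r1 hp hpq hq
  have hr1p := r1_pos hp hpq hq
  have hpow : |r2 p q| ^ n ≤ r1 p q ^ n :=
    pow_le_pow_left₀ (abs_nonneg _) (le_of_lt habs) n
  have habs_pow : |r2 p q ^ n| = |r2 p q| ^ n := abs_pow _ _
  have hub : r2 p q ^ n ≤ r1 p q ^ n := le_trans (le_abs_self _) (by rw [habs_pow] at *; linarith)
  have hlb : -(r1 p q ^ n) ≤ r2 p q ^ n := by
    have := neg_abs_le (r2 p q ^ n); rw [habs_pow] at this; linarith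
  have hr1n : (0:ℝ) ≤ r1 p q ^ n := le_of_lt (pow_pos hr1p n)
  constructor
  · rw [gF, zpow_natCast, zpow_natCast, c2]; nlinarith
  · rw [gF, zpow_natCast, zpow_natCast, c2]; nlinarith

lemma hF_bounds (n : ℕ) : 0 ≤ hF p q (n:ℤ) ∧ hF p q (n:ℤ) ≤ r1 p q ^ n := by
  rcases Nat.eq_zero_or_pos n with rfl | hn
  · norm_num [hF]
  · rw [hF_eq_gF hp hpq hq (by omega)]
    exact gF_nat_bounds hp hpq hq n

end Facts

end MaxQueueAux

namespace MaxQueueAux2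
open MaxQueueAux Filter

variable {p q : ℝ}

lemma uSeq_le_hF (hp : 0 < p) (hpq : p < 1/2) (hq : q = 1 - p) (m : ℕ) (k : ℤ) :
    uSeq p q (4*m) k ≤ hF p q k := by
  induction m generalizing k with
  | zero =>
      rcases le_or_gt k 0 with hk | hk
      · rw [uSeq_nonpos _ hk, hF, if_pos hk]
      · rw [show 4*0 = 0 from rfl, uSeq_eq_zero 0 (by exact_mod_cast hk)]
        have := hF_bounds hp hpq hq k.toNat
        rw [Int.toNat_of_nonneg (by omega)] at this
        exact this.1
  | succ m ih =>
      rcases le_or_gt k 0 with hk | hk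
      · rw [uSeq_nonpos _ hk, hF, if_pos hk]
      · have hq' : 0 < q := hq0 hp hpq hq
        have hcyc := uSeq_cycle (p := p) (q := q) (by subst hq; ring) m (by omega : 1 ≤ k)
        rw [hcyc, hF_rec hp hpq hq (by omega : 1 ≤ k)]
        have g1 := ih (k+2); have g2 := ih (k+1); have g3 := ih k
        have g4 := ih (k-1); have g5 := ih (k-2)
        have b0 : (0:ℝ) ≤ q^4 := by positivity
        have b1 : (0:ℝ) ≤ 4*p*q^3 := by positivity
        have b2 : (0:ℝ) ≤ 6*p^2*q^2 := by positivity
        have b3 : (0:ℝ) ≤ 4*p^3*q := by positivity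
        have b4 : (0:ℝ) ≤ p^4 := by positivity
        have := mul_le_mul_of_nonneg_left g1 b0
        have := mul_le_mul_of_nonneg_left g2 b1
        have := mul_le_mul_of_nonneg_left g3 b2
        have := mul_le_mul_of_nonneg_left g4 b3
        have := mul_le_mul_of_nonneg_left g5 b4
        linarith

lemma tendsto_uSeq (hp : 0 < p) (hpq : p < 1/2) (hq : q = 1 - p) (k : ℤ) :
    Tendsto (fun m : ℕ => uSeq p q (4*m) k) atTop (nhds (hF p q k)) := by
  have hq' : 0 < q := hq0 hp hpq hq
  have hp' : 0 ≤ p := le_of_lt hp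
  have hq'' : 0 ≤ q := le_of_lt hq'
  have hpq1 : p + q = 1 := by subst hq; ring
  have hmono : ∀ k : ℤ, Monotone (fun m : ℕ => uSeq p q (4*m) k) := by
    intro k
    apply monotone_nat_of_le_succ
    intro m
    have := uSeq_mono hp' hq'' hpq1 (4*m) k
    simpa [show 4*m+4 = 4*(m+1) from by ring] using this
  have hbdd : ∀ k : ℤ, BddAbove (Set.range (fun m : ℕ => uSeq p q (4*m) k)) := by
    intro k
    refine ⟨1, ?_⟩
    rintro x ⟨m, rfl⟩
    exact uSeq_le_one hp' hq'' hpq1 _ _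
  set L : ℤ → ℝ := fun k => ⨆ m : ℕ, uSeq p q (4*m) k with hLdef
  have hten : ∀ k : ℤ, Tendsto (fun m : ℕ => uSeq p q (4*m) k) atTop (nhds (L k)) :=
    fun k => tendsto_atTop_ciSup (hmono k) (hbdd k)
  have hL1 : ∀ k : ℤ, k ≤ 0 → L k = 1 := by
    intro k hk
    have : (fun m : ℕ => uSeq p q (4*m) k) = fun _ => (1:ℝ) :=
      funext fun m => uSeq_nonpos _ hk
    simp only [hLdef, this]
    exact ciSup_const
  have hLle : ∀ k : ℤ, L k ≤ hF p q k :=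
    fun k => ciSup_le (fun m => uSeq_le_hF hp hpq hq m k)
  have hLnn : ∀ k : ℤ, 0 ≤ L k := by
    intro k
    refine le_trans (uSeq_nonneg hp' hq'' 0 k) ?_
    exact le_ciSup (hbdd k) 0
  have hLrec : ∀ k : ℤ, 1 ≤ k → L k
      = q^4 * L (k+2) + 4*p*q^3 * L (k+1) + 6*p^2*q^2 * L k
        + 4*p^3*q * L (k-1) + p^4 * L (k-2) := by
    intro k hk
    have t1 : Tendsto (fun m : ℕ => uSeq p q (4*(m+1)) k) atTop (nhds (L k)) :=
      (hten k).comp (tendsto_add_atTop_nat 1)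
    have t2 : Tendsto (fun m : ℕ => uSeq p q (4*(m+1)) k) atTop
        (nhds (q^4 * L (k+2) + 4*p*q^3 * L (k+1) + 6*p^2*q^2 * L k
          + 4*p^3*q * L (k-1) + p^4 * L (k-2))) := by
      have e : (fun m : ℕ => uSeq p q (4*(m+1)) k)
          = fun m => q^4 * uSeq p q (4*m) (k+2) + 4*p*q^3 * uSeq p q (4*m) (k+1)
            + 6*p^2*q^2 * uSeq p q (4*m) k + 4*p^3*q * uSeq p q (4*m) (k-1)
            + p^4 * uSeq p q (4*m) (k-2) :=
        funext fun m => uSeq_cycle hpq1 m hk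
      rw [e]
      exact ((((((hten (k+2)).const_mul _).add ((hten (k+1)).const_mul _)).add
        ((hten k).const_mul _)).add ((hten (k-1)).const_mul _)).add
        ((hten (k-2)).const_mul _))
    exact tendsto_nhds_unique t1 t2
  set F : ℕ → ℝ := fun n => hF p q ((n:ℤ)-1) - L ((n:ℤ)-1) with hFdef
  have hFnn : ∀ n, 0 ≤ F n := fun n => sub_nonneg.2 (hLle _)
  have hF0 : F 0 = 0 := by
    simp only [hFdef]
    rw [hF, if_pos (by norm_num), hL1 _ (by norm_num)]
    norm_num
  have hF1 : F 1 = 0 := by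
    simp only [hFdef]
    rw [hF, if_pos (by norm_num), hL1 _ (by norm_num)]
    norm_num
  have hr1p := r1_pos hp hpq hq
  have hr1lt := r1_lt_one hp hpq hq
  have hFle : ∀ n : ℕ, F n ≤ (r1 p q)⁻¹ * r1 p q ^ n := by
    intro n
    have h1 : F n ≤ hF p q ((n:ℤ)-1) := by
      have := hLnn ((n:ℤ)-1); simp only [hFdef]; linarith
    rcases Nat.eq_zero_or_pos n with rfl | hn
    · rw [hF0]; positivity
    · have e : ((n:ℤ)-1) = ((n-1 : ℕ) : ℤ) := by omega
      have hb := (hF_bounds hp hpq hq (n-1)).2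
      rw [← e] at hb
      refine le_trans h1 (le_trans hb ?_)
      have e2 : r1 p q ^ (n-1) = (r1 p q)⁻¹ * r1 p q ^ n := by
        rw [← zpow_natCast (r1 p q) (n-1), ← zpow_natCast (r1 p q) n, ← zpow_neg_one,
          ← zpow_add₀ (ne_of_gt hr1p)]
        congr 1
        omega
      rw [e2]
  have hsumgeo : Summable (fun n : ℕ => (r1 p q)⁻¹ * r1 p q ^ n) :=
    (summable_geometric_of_lt_one (le_of_lt hr1p) hr1lt).mul_left _
  have hFsum : Summable F := Summable.of_nonneg_of_le hFnn hFle hsumgeo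
  have hFrec : ∀ n : ℕ, F (n+2)
      = q^4 * F (n+4) + 4*p*q^3 * F (n+3) + 6*p^2*q^2 * F (n+2)
        + 4*p^3*q * F (n+1) + p^4 * F n := by
    intro n
    have hk : (1:ℤ) ≤ (n:ℤ)+1 := by omega
    have e1 := hF_rec hp hpq hq hk
    have e2 := hLrec ((n:ℤ)+1) hk
    simp only [hFdef]
    push_cast
    rw [show (n:ℤ)+4-1 = ((n:ℤ)+1)+2 from by ring, show (n:ℤ)+3-1 = ((n:ℤ)+1)+1 from by ring,
      show (n:ℤ)+2-1 = ((n:ℤ)+1) from by ring, show (n:ℤ)+1-1 = ((n:ℤ)+1)-1 from by ring,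
      show (n:ℤ)-1 = ((n:ℤ)+1)-2 from by ring]
    linear_combination e1 - e2
  have hshift : ∀ j : ℕ, Summable (fun n : ℕ => F (n + j)) :=
    fun j => (summable_nat_add_iff j).2 hFsum
  have hsum_eq : ∀ j : ℕ, ∑' n : ℕ, F (n + j) = (∑' n, F n) - ∑ i ∈ Finset.range j, F i := by
    intro j
    have := Summable.sum_add_tsum_nat_add j hFsum
    linarith
  have hbin : q^4 + 4*p*q^3 + 6*p^2*q^2 + 4*p^3*q + p^4 = 1 := by
    subst hq; ring
  have keyeq : q^4 * (F 2 + F 3) + 4*p*q^3 * F 2 = 0 := by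
    have s4 := (hshift 4).mul_left (q^4)
    have s3 := (hshift 3).mul_left (4*p*q^3)
    have s2 := (hshift 2).mul_left (6*p^2*q^2)
    have s1 := (hshift 1).mul_left (4*p^3*q)
    have s0 := hFsum.mul_left (p^4)
    have e : ∑' n : ℕ, F (n+2)
        = q^4 * (∑' n : ℕ, F (n+4)) + 4*p*q^3 * (∑' n : ℕ, F (n+3))
          + 6*p^2*q^2 * (∑' n : ℕ, F (n+2)) + 4*p^3*q * (∑' n : ℕ, F (n+1))
          + p^4 * (∑' n : ℕ, F n) := by
      have s0' : Summable (fun n : ℕ => p^4 * F (n + 0)) := by simpa using s0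
      calc ∑' n : ℕ, F (n+2)
          = ∑' n : ℕ, (q^4 * F (n+4) + 4*p*q^3 * F (n+3) + 6*p^2*q^2 * F (n+2)
            + 4*p^3*q * F (n+1) + p^4 * F n) := tsum_congr (fun n => hFrec n)
        _ = _ := by
            rw [Summable.tsum_add ((((s4.add s3)).add s2).add s1) s0,
              Summable.tsum_add ((s4.add s3).add s2) s1, Summable.tsum_add (s4.add s3) s2,
              Summable.tsum_add s4 s3, tsum_mul_left, tsum_mul_left, tsum_mul_left,
              tsum_mul_left, tsum_mul_left]
    rw [hsum_eq 4, hsum_eq 3, hsum_eq 2, hsum_eq 1] at e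
    simp only [Finset.sum_range_succ, Finset.sum_range_zero, hF0, hF1, zero_add, add_zero] at e
    linear_combination (∑' n, F n) * hbin + e
  have hq4pos : (0:ℝ) < q^4 := pow_pos hq' 4
  have hcoef : (0:ℝ) < q^4 + 4*p*q^3 := by positivity
  have h2 : F 2 = 0 := by
    refine le_antisymm ?_ (hFnn 2)
    by_contra hcon
    push_neg at hcon
    have hb : 0 ≤ q^4 * F 3 := mul_nonneg (le_of_lt hq4pos) (hFnn 3)
    nlinarith [mul_pos hcoef hcon]
  have h3 : F 3 = 0 := by
    have : q^4 * F 3 = q^4 * 0 := by rw [h2] at keyeq; linarith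
    exact mul_left_cancel₀ (ne_of_gt hq4pos) this
  have hFzero : ∀ n, F n = 0 := by
    intro n
    induction n using Nat.strong_induction_on with
    | _ n ih =>
      match n, ih with
      | 0, _ => exact hF0
      | 1, _ => exact hF1
      | 2, _ => exact h2
      | 3, _ => exact h3
      | (m+4), ih =>
        have e := hFrec m
        rw [ih (m+3) (by omega), ih (m+2) (by omega), ih (m+1) (by omega),
          ih m (by omega)] at e
        have : q^4 * F (m+4) = q^4 * 0 := by rw [mul_zero]; linarith
        exact mul_left_cancel₀ (ne_of_gt hq4pos) this
  have hLhF : L k = hF p q k := by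
    rcases le_or_gt k 0 with hk | hk
    · rw [hL1 k hk, hF, if_pos hk]
    · have := hFzero (k+1).toNat
      simp only [hFdef] at this
      rw [Int.toNat_of_nonneg (by omega : (0:ℤ) ≤ k+1)] at this
      rw [show k+1-1 = k from by ring] at this
      linarith
  rw [← hLhF]
  exact hten k

theorem det_main (hp : 0 < p) (hpq : p < 1/2) (hq : q = 1 - p) :
    Tendsto (fun m : ℕ => ∑ k ∈ Finset.Icc (1:ℤ) (4*m : ℕ), uSeq p q (4*m) k) atTop
      (nhds (1/4 * (-4 + 2*(q-p) + 1/(q-p) + Real.sqrt (1+4*p*q)))) := by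
  have hq' : 0 < q := hq0 hp hpq hq
  have hp' : 0 ≤ p := le_of_lt hp
  have hpq1 : p + q = 1 := by subst hq; ring
  have hr1p := r1_pos hp hpq hq
  have hr1lt := r1_lt_one hp hpq hq
  have habs2 := abs_r2_lt_r1 hp hpq hq
  have hr2abs : |r2 p q| < 1 := lt_trans habs2 hr1lt
  -- rewrite finite sums as tsums
  have hsum_eq : ∀ m : ℕ, ∑ k ∈ Finset.Icc (1:ℤ) (4*m : ℕ), uSeq p q (4*m) k
      = ∑' n : ℕ, uSeq p q (4*m) ((n:ℤ)+1) := by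
    intro m
    rw [tsum_eq_sum (s := Finset.range (4*m))
      (fun n hn => uSeq_eq_zero _ (by simp at hn; omega))]
    refine Finset.sum_nbij' (i := fun (k : ℤ) => k.toNat - 1) (j := fun (n : ℕ) => (n:ℤ)+1)
      ?_ ?_ ?_ ?_ ?_
    · intro a ha; simp only [Finset.mem_Icc] at ha; simp only [Finset.mem_range]; omega
    · intro a ha; simp only [Finset.mem_range] at ha; simp only [Finset.mem_Icc]; omega
    · intro a ha; simp only [Finset.mem_Icc] at ha; omega
    · intro a ha; simp only [Finset.mem_range] at ha; omega
    · intro a ha; simp only [Finset.mem_Icc] at ha; congr 1; omega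
  have htarget : ∑' n : ℕ, hF p q ((n:ℤ)+1)
      = 1/4 * (-4 + 2*(q-p) + 1/(q-p) + Real.sqrt (1+4*p*q)) := by
    have hg : ∀ n : ℕ, hF p q ((n:ℤ)+1)
        = (c1 p q * r1 p q) * r1 p q ^ n + (c2 p q * r2 p q) * r2 p q ^ n := by
      intro n
      rw [hF_eq_gF hp hpq hq (by omega), gF,
        show ((n:ℤ)+1) = (((n+1 : ℕ)):ℤ) from by push_cast; ring,
        zpow_natCast, zpow_natCast, pow_succ, pow_succ]
      ring
    rw [tsum_congr hg]
    have sg1 : Summable (fun n : ℕ => (c1 p q * r1 p q) * r1 p q ^ n) :=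
      (summable_geometric_of_lt_one (le_of_lt hr1p) hr1lt).mul_left _
    have sg2 : Summable (fun n : ℕ => (c2 p q * r2 p q) * r2 p q ^ n) := by
      refine Summable.mul_left _ (summable_geometric_of_norm_lt_one ?_)
      rwa [Real.norm_eq_abs]
    rw [Summable.tsum_add sg1 sg2, tsum_mul_left, tsum_mul_left,
      tsum_geometric_of_norm_lt_one (by rwa [Real.norm_eq_abs, abs_of_pos hr1p]),
      tsum_geometric_of_norm_lt_one (by rwa [Real.norm_eq_abs])]
    -- final algebraic identity
    have h1ne : (1:ℝ) - r1 p q ≠ 0 := by intro h; nlinarith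
    have hr2neg := r2_neg hp hpq hq
    have h2ne : (1:ℝ) - r2 p q ≠ 0 := by intro h; nlinarith
    have base : (c1 p q * r1 p q) * (1 - r2 p q) + (c2 p q * r2 p q) * (1 - r1 p q)
        = (1/4 * (-4 + 2*(q-p) + 1/(q-p) + sD p q)) * ((1 - r1 p q) * (1 - r2 p q)) := by
      have hqp : q - p ≠ 0 := by subst hq; intro h; nlinarith
      rw [c1, c2, c1, r1, r2]
      subst hq
      field_simp
      ring
    rw [show Real.sqrt (1+4*p*q) = sD p q from rfl]
    rw [← div_eq_mul_inv, ← div_eq_mul_inv, div_add_div _ _ h1ne h2ne,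
      div_eq_iff (mul_ne_zero h1ne h2ne)]
    linear_combination base
  rw [show (fun m : ℕ => ∑ k ∈ Finset.Icc (1:ℤ) (4*m : ℕ), uSeq p q (4*m) k)
      = fun m : ℕ => ∑' n : ℕ, uSeq p q (4*m) ((n:ℤ)+1) from funext hsum_eq, ← htarget]
  apply tendsto_tsum_of_dominated_convergence (bound := fun n : ℕ => r1 p q ^ n)
  · exact summable_geometric_of_lt_one (le_of_lt hr1p) hr1lt
  · exact fun n => tendsto_uSeq hp hpq hq ((n:ℤ)+1)
  · apply Filter.Eventually.of_forall
    intro m n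
    rw [Real.norm_eq_abs, abs_of_nonneg (uSeq_nonneg hp' (le_of_lt hq') _ _)]
    calc uSeq p q (4*m) ((n:ℤ)+1) ≤ hF p q ((n:ℤ)+1) := uSeq_le_hF hp hpq hq m _
      _ ≤ r1 p q ^ (n+1) := by
          have := (hF_bounds hp hpq hq (n+1)).2
          rwa [show (((n+1:ℕ)):ℤ) = (n:ℤ)+1 from by push_cast; ring] at this
      _ ≤ r1 p q ^ n := by
          rw [pow_succ]
          nlinarith [pow_pos hr1p n, pow_nonneg (le_of_lt hr1p) n]

end MaxQueueAux2
namespace MaxQueueAux2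
open MaxQueueAux MeasureTheory ProbabilityTheory Filter

/-- recursive functional computing S from the increments -/
def phi : ℕ → (ℕ → ℤ) → ℤ
  | 0, _ => 0
  | (j+1), g => max (phi j g + g (j+1)) 0

lemma phi_congr : ∀ (j : ℕ) (g g' : ℕ → ℤ), (∀ i, 1 ≤ i → i ≤ j → g i = g' i) →
    phi j g = phi j g'
  | 0, g, g', _ => rfl
  | (j+1), g, g', h => by
      rw [phi, phi, phi_congr j g g' (fun i h1 h2 => h i h1 (by omega)),
        h (j+1) (by omega) le_rfl]

lemma count_sum (B : ℕ) (n : ℤ) (h0 : 0 ≤ n) (hB : n ≤ (B:ℤ)) :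
    ∑ k ∈ Finset.Icc (1:ℤ) (B:ℤ), (if k ≤ n then (1:ℝ) else 0) = (n:ℝ) := by
  rw [Finset.sum_boole]
  have hf : (Finset.Icc (1:ℤ) (B:ℤ)).filter (fun k => k ≤ n) = Finset.Icc (1:ℤ) n := by
    ext k; simp only [Finset.mem_filter, Finset.mem_Icc]; omega
  rw [hf, Int.card_Icc, show n + 1 - 1 = n from by ring]
  have := Int.toNat_of_nonneg h0
  exact_mod_cast congrArg (fun z : ℤ => (z : ℝ)) this

end MaxQueueAux2


open MaxQueueAux MaxQueueAux2

/-- For 0 < p < 1/2 and the ℓ = 2 (RRGG-cycle) walk,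
E(S_{4m}) → (1/4)[-4 + 2(q-p) + 1/(q-p) + √(1+4pq)]. -/
theorem maxQueue_stationary_mean_ell_two
    (p q : ℝ) (hp : 0 < p) (hpq : p < 1 / 2) (hq : q = 1 - p)
    {Ω : Type*} [MeasurableSpace Ω] (μ : Measure Ω) [IsProbabilityMeasure μ]
    (X : ℕ → Ω → ℤ) (hXmeas : ∀ i, Measurable (X i))
    (hXindep : iIndepFun X μ)
    (hXred : ∀ i : ℕ, i % 4 = 1 ∨ i % 4 = 2 →
      μ {ω | X i ω = 1} = ENNReal.ofReal p ∧ μ {ω | X i ω = 0} = ENNReal.ofReal q)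
    (hXgreen : ∀ i : ℕ, 1 ≤ i → (i % 4 = 3 ∨ i % 4 = 0) →
      μ {ω | X i ω = 0} = ENNReal.ofReal p ∧ μ {ω | X i ω = -1} = ENNReal.ofReal q)
    (S : ℕ → Ω → ℤ) (hS0 : ∀ ω, S 0 ω = 0)
    (hS : ∀ (j : ℕ) (ω : Ω), S (j + 1) ω = max (S j ω + X (j + 1) ω) 0) :
    Tendsto (fun m : ℕ => ∫ ω, ((S (4 * m) ω : ℤ) : ℝ) ∂μ) atTop
      (nhds (1 / 4 * (-4 + 2 * (q - p) + 1 / (q - p) + Real.sqrt (1 + 4 * p * q)))) := by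
  have hq' : 0 < q := by linarith
  have hp' : (0:ℝ) ≤ p := le_of_lt hp
  have hq'' : (0:ℝ) ≤ q := le_of_lt hq'
  have hpq1 : p + q = 1 := by linarith
  -- S determined by X
  have hS_eq : ∀ (j : ℕ) (ω : Ω), S j ω = phi j (fun i => X i ω) := by
    intro j ω
    induction j with
    | zero => rw [hS0]; rfl
    | succ j ih => rw [hS, ih]; rfl
  -- measurability
  have hSmeas : ∀ j, Measurable (S j) := by
    intro j
    induction j with
    | zero =>
        have : S 0 = fun _ => (0:ℤ) := funext hS0
        rw [this]; exact measurable_const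
    | succ j ih =>
        have he : S (j+1) = fun ω => max (S j ω + X (j+1) ω) 0 :=
          funext (fun ω => hS j ω)
        rw [he]
        exact (measurable_of_countable (fun z : ℤ × ℤ => max (z.1 + z.2) 0)).comp
          (ih.prodMk (hXmeas (j+1)))
  have hSnn : ∀ j ω, 0 ≤ S j ω := by
    intro j ω
    cases j with
    | zero => rw [hS0]
    | succ j => rw [hS]; exact le_max_right _ _
  -- independence of S j and X (j+1)
  have hindep : ∀ j : ℕ, IndepFun (S j) (X (j+1)) μ := by
    intro j
    have hdisj : Disjoint (Finset.Icc 1 j) ({j+1} : Finset ℕ) := by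
      simp only [Finset.disjoint_left, Finset.mem_Icc, Finset.mem_singleton]
      omega
    have h := hXindep.indepFun_finset (Finset.Icc 1 j) {j+1} hdisj hXmeas
    have h2 := h.comp
      (φ := fun g : ((i : (Finset.Icc 1 j : Finset ℕ)) → ℤ) =>
        phi j (fun i => if hi : i ∈ Finset.Icc 1 j then g ⟨i, hi⟩ else 0))
      (ψ := fun g : ((i : ({j+1} : Finset ℕ)) → ℤ) => g ⟨j+1, Finset.mem_singleton_self _⟩)
      (measurable_of_countable _) (measurable_of_countable _)
    have e1 : (fun g : ((i : (Finset.Icc 1 j : Finset ℕ)) → ℤ) =>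
        phi j (fun i => if hi : i ∈ Finset.Icc 1 j then g ⟨i, hi⟩ else 0))
          ∘ (fun a (i : (Finset.Icc 1 j : Finset ℕ)) => X i a) = S j := by
      funext ω
      show phi j _ = S j ω
      rw [hS_eq j ω]
      apply phi_congr
      intro i h1 h2
      rw [dif_pos (Finset.mem_Icc.mpr ⟨h1, h2⟩)]
    have e2 : (fun g : ((i : ({j+1} : Finset ℕ)) → ℤ) => g ⟨j+1, Finset.mem_singleton_self _⟩)
        ∘ (fun a (i : ({j+1} : Finset ℕ)) => X i a) = X (j+1) := rfl
    rw [e1, e2] at h2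
    exact h2
  -- measurability of Ici-sets in ℤ
  have hZmeas : ∀ s : Set ℤ, MeasurableSet s := fun s => s.to_countable.measurableSet
  -- the tail law
  have tails : ∀ (j : ℕ) (k : ℤ),
      (μ {ω | k ≤ S j ω}).toReal = uSeq p q j k := by
    intro j
    induction j with
    | zero =>
        intro k
        rcases le_or_gt k 0 with hk | hk
        · have : {ω | k ≤ S 0 ω} = Set.univ := by
            apply Set.eq_univ_of_forall
            intro ω; simp only [Set.mem_setOf_eq, hS0]; omega
          rw [this, measure_univ, ENNReal.toReal_one, uSeq_nonpos _ hk]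
        · have : {ω | k ≤ S 0 ω} = ∅ := by
            apply Set.eq_empty_iff_forall_notMem.mpr
            intro ω; simp only [Set.mem_setOf_eq, hS0]; omega
          rw [this, measure_empty, ENNReal.toReal_zero,
            uSeq_eq_zero 0 (by exact_mod_cast hk)]
    | succ j ih =>
        intro k
        rcases le_or_gt k 0 with hk | hk
        · have : {ω | k ≤ S (j+1) ω} = Set.univ := by
            apply Set.eq_univ_of_forall
            intro ω; exact le_trans hk (hSnn (j+1) ω)
          rw [this, measure_univ, ENNReal.toReal_one, uSeq_nonpos _ hk]
        · -- generic split lemma applied to the two cases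
          have split : ∀ (a b : ℤ) (ca cb : ℝ), a ≠ b → 0 ≤ ca → 0 ≤ cb → ca + cb = 1 →
              μ {ω | X (j+1) ω = a} = ENNReal.ofReal ca →
              μ {ω | X (j+1) ω = b} = ENNReal.ofReal cb →
              (μ {ω | k ≤ S (j+1) ω}).toReal
                = ca * (μ {ω | k - a ≤ S j ω}).toReal
                  + cb * (μ {ω | k - b ≤ S j ω}).toReal := by
            intro a b ca cb hab hca hcb hcacb hma hmb
            set A := X (j+1) ⁻¹' {a} with hA
            set B := X (j+1) ⁻¹' {b} with hB
            have hAmeas : MeasurableSet A := hXmeas (j+1) (hZmeas _)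
            have hBmeas : MeasurableSet B := hXmeas (j+1) (hZmeas _)
            have hdisjAB : Disjoint A B := by
              apply Set.disjoint_left.mpr
              intro ω hωA hωB
              exact hab ((Set.mem_preimage.mp hωA).symm.trans (Set.mem_preimage.mp hωB) : a = b)
            have hABfull : μ (A ∪ B)ᶜ = 0 := by
              have hUnion : μ (A ∪ B) = 1 := by
                rw [measure_union hdisjAB hBmeas]
                show μ {ω | X (j+1) ω = a} + μ {ω | X (j+1) ω = b} = 1
                rw [hma, hmb, ← ENNReal.ofReal_add hca hcb, hcacb, ENNReal.ofReal_one]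
              rw [measure_compl (hAmeas.union hBmeas) (measure_ne_top μ _), hUnion,
                measure_univ, tsub_self]
            set E := {ω | k ≤ S (j+1) ω} with hE
            have hEmeas : MeasurableSet E := hSmeas (j+1) (hZmeas (Set.Ici k))
            have hsplit : μ E = μ (E ∩ A) + μ (E ∩ B) := by
              have h1 : μ (E ∩ (A ∪ B)) + μ (E \ (A ∪ B)) = μ E :=
                measure_inter_add_diff E (hAmeas.union hBmeas)
              have h2 : μ (E \ (A ∪ B)) = 0 :=
                measure_mono_null (Set.diff_subset_compl _ _) hABfull
              have h3 : E ∩ (A ∪ B) = (E ∩ A) ∪ (E ∩ B) := Set.inter_union_distrib_left E A B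
              have h4 : μ ((E ∩ A) ∪ (E ∩ B)) = μ (E ∩ A) + μ (E ∩ B) :=
                measure_union (hdisjAB.mono Set.inter_subset_right Set.inter_subset_right)
                  (hEmeas.inter hBmeas)
              rw [← h1, h2, add_zero, h3, h4]
            have hEA : E ∩ A = {ω | k - a ≤ S j ω} ∩ A := by
              ext ω
              simp only [hE, Set.mem_inter_iff, Set.mem_setOf_eq, hA, Set.mem_preimage,
                Set.mem_singleton_iff]
              constructor
              · rintro ⟨h1, h2⟩
                refine ⟨?_, h2⟩
                rw [hS j ω, h2] at h1
                omega
              · rintro ⟨h1, h2⟩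
                refine ⟨?_, h2⟩
                rw [hS j ω, h2]
                omega
            have hEB : E ∩ B = {ω | k - b ≤ S j ω} ∩ B := by
              ext ω
              simp only [hE, Set.mem_inter_iff, Set.mem_setOf_eq, hB, Set.mem_preimage,
                Set.mem_singleton_iff]
              constructor
              · rintro ⟨h1, h2⟩
                refine ⟨?_, h2⟩
                rw [hS j ω, h2] at h1
                omega
              · rintro ⟨h1, h2⟩
                refine ⟨?_, h2⟩
                rw [hS j ω, h2]
                omega
            have hprod : ∀ (c : ℤ) (d : ℤ) (cd : ℝ), 0 ≤ cd →
                μ {ω | X (j+1) ω = d} = ENNReal.ofReal cd →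
                (μ ({ω | c ≤ S j ω} ∩ X (j+1) ⁻¹' {d})).toReal
                  = cd * (μ {ω | c ≤ S j ω}).toReal := by
              intro c d cd hcd hmd
              have := (hindep j).measure_inter_preimage_eq_mul (Set.Ici c) {d}
                (hZmeas _) (hZmeas _)
              have hpre : S j ⁻¹' (Set.Ici c) = {ω | c ≤ S j ω} := rfl
              rw [hpre] at this
              rw [this]
              have : μ (X (j+1) ⁻¹' {d}) = ENNReal.ofReal cd := hmd
              rw [this, ENNReal.toReal_mul, ENNReal.toReal_ofReal hcd, mul_comm]
            rw [hsplit, hEA, hEB, ENNReal.toReal_add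
              (measure_ne_top μ _) (measure_ne_top μ _), hprod _ a ca hca hma,
              hprod _ b cb hcb hmb]
          by_cases hmod : (j+1) % 4 = 1 ∨ (j+1) % 4 = 2
          · obtain ⟨hma, hmb⟩ := hXred (j+1) hmod
            rw [split 1 0 p q (by omega) hp' hq'' hpq1 hma hmb, sub_zero,
              ih (k-1), ih k, uSeq_red j hmod hk]
          · have hmod' : (j+1) % 4 = 3 ∨ (j+1) % 4 = 0 := by omega
            obtain ⟨hma, hmb⟩ := hXgreen (j+1) (by omega) hmod'
            rw [split 0 (-1) p q (by omega) hp' hq'' hpq1 hma hmb, sub_zero,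
              show k - (-1) = k + 1 from by ring, ih k, ih (k+1), uSeq_green j hmod hk]
  -- a.e. upper bound on the increments
  have aeb : ∀ᵐ ω ∂μ, ∀ i : ℕ, 1 ≤ i → X i ω ≤ 1 := by
    rw [ae_all_iff]
    intro i
    rcases Nat.eq_zero_or_pos i with rfl | hi
    · exact Filter.Eventually.of_forall (fun ω h => absurd h (by omega))
    · have habs : ∀ (a b : ℤ), a ≠ b → a ≤ 1 → b ≤ 1 →
          μ {ω | X i ω = a} + μ {ω | X i ω = b} = 1 →
          ∀ᵐ ω ∂μ, 1 ≤ i → X i ω ≤ 1 := by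
        intro a b hab ha hb hsum
        rw [ae_iff]
        have hnull : μ ({ω | X i ω = a} ∪ {ω | X i ω = b})ᶜ = 0 := by
          have hmeasu : MeasurableSet ({ω | X i ω = a} ∪ {ω | X i ω = b}) :=
            ((hXmeas i) (hZmeas {a})).union ((hXmeas i) (hZmeas {b}))
          have hdisj : Disjoint {ω | X i ω = a} {ω | X i ω = b} := by
            apply Set.disjoint_left.mpr
            intro ω h1 h2
            have e1 : X i ω = a := h1
            have e2 : X i ω = b := h2
            exact hab (e1.symm.trans e2)
          have hu : μ ({ω | X i ω = a} ∪ {ω | X i ω = b}) = 1 := by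
            rw [measure_union hdisj ((hXmeas i) (hZmeas {b}))]; exact hsum
          rw [measure_compl hmeasu (measure_ne_top μ _), hu, measure_univ, tsub_self]
        refine measure_mono_null ?_ hnull
        intro ω hω
        simp only [Set.mem_setOf_eq, not_forall] at hω
        simp only [Set.mem_compl_iff, Set.mem_union, Set.mem_setOf_eq]
        push_neg
        obtain ⟨_, h2⟩ := hω
        constructor <;> [intro hc; intro hc] <;> omega
      by_cases hmod : i % 4 = 1 ∨ i % 4 = 2
      · obtain ⟨hma, hmb⟩ := hXred i hmod
        exact habs 1 0 (by omega) le_rfl (by omega) (by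
          rw [hma, hmb, ← ENNReal.ofReal_add hp' hq'', hpq1, ENNReal.ofReal_one])
      · obtain ⟨hma, hmb⟩ := hXgreen i hi (by omega)
        exact habs 0 (-1) (by omega) (by omega) (by omega) (by
          rw [hma, hmb, ← ENNReal.ofReal_add hp' hq'', hpq1, ENNReal.ofReal_one])
  -- the integral identity
  have integral_eq : ∀ m : ℕ, ∫ ω, ((S (4*m) ω : ℤ) : ℝ) ∂μ
      = ∑ k ∈ Finset.Icc (1:ℤ) ((4*m : ℕ) : ℤ), uSeq p q (4*m) k := by
    intro m
    set B : ℕ := 4*m with hBdef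
    have hae : ∀ᵐ ω ∂μ, ((S B ω : ℤ) : ℝ)
        = ∑ k ∈ Finset.Icc (1:ℤ) (B:ℤ),
            Set.indicator {ω' | k ≤ S B ω'} (fun _ => (1:ℝ)) ω := by
      filter_upwards [aeb] with ω hω
      have hSb : ∀ j : ℕ, S j ω ≤ j := by
        intro j
        induction j with
        | zero => rw [hS0]; simp
        | succ j ihj =>
            rw [hS]
            have := hω (j+1) (by omega)
            push_cast
            omega
      have hnn := hSnn B ω
      have hb := hSb B
      rw [show (∑ k ∈ Finset.Icc (1:ℤ) (B:ℤ),
          Set.indicator {ω' | k ≤ S B ω'} (fun _ => (1:ℝ)) ω)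
          = ∑ k ∈ Finset.Icc (1:ℤ) (B:ℤ), (if k ≤ S B ω then (1:ℝ) else 0) from
        Finset.sum_congr rfl (fun k _ => by
          rw [Set.indicator_apply]
          simp only [Set.mem_setOf_eq])]
      exact (count_sum B (S B ω) hnn (by exact_mod_cast hb)).symm
    rw [integral_congr_ae hae,
      integral_finset_sum _ (fun k _ => (integrable_const (1:ℝ)).indicator
        (show MeasurableSet {ω' | k ≤ S B ω'} from hSmeas B (hZmeas (Set.Ici k))))]
    apply Finset.sum_congr rfl
    intro k _
    rw [integral_indicator_const (1:ℝ)
      (show MeasurableSet {ω' | k ≤ S B ω'} from hSmeas B (hZmeas (Set.Ici k))),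
      smul_eq_mul, mul_one, measureReal_def, tails B k]
  have hfun : (fun m : ℕ => ∫ ω, ((S (4 * m) ω : ℤ) : ℝ) ∂μ)
      = fun m : ℕ => ∑ k ∈ Finset.Icc (1:ℤ) ((4*m : ℕ) : ℤ), uSeq p q (4*m) k :=
    funext integral_eq
  rw [hfun]
  exact MaxQueueAux2.det_main hp hpq hq
end
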